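/- arXiv:2103.13988 — 6 statements merged into one kernel-verified Lean document; each statement's English description precedes it below -/
import Mathlib

section
/- Let α₂ ≥ α₁ > 0, μ > 0, c_T ∈ (0,1), and ℓ_T, ℓ_g, ℓ_x > 0 be constants, and let P be a symmetric positive definite matrix with largest eigenvalue λmax(P), smallest eigenvalue λmin(P), and condition number κ(P) = λmax(P)/λmin(P). For a sampling period τ > 0 and relaxation parameter ε, define c_W := √(α₂/α₁)·e^{-τμ/2}, ℓ_W := √α₁·ℓ_x, and the 2×2 matrix M := [[1 − ε(1 − c_T), (λmax(P)·ℓ_T·ℓ_g/√α₁)·ε·c_W], [λmin(P)^{-1}·(1 + c_T)·ε·ℓ_W·c_W, (1 + (ℓ_W·ℓ_T·ℓ_g/√α₁)·ε·c_W)·c_W]]. If τ > log(α₂/α₁)/μ and 0 < ε ≤ 1 with ε < ε̄(τ) := e^{τμ/2}·(e^{τμ/2} − √(α₂/α₁)) / (ℓ_g·ℓ_x·ℓ_T·(1 + κ(P)·(1 + c_T)/(1 − c_T))·(α₂/α₁)), then the spectral radius of M satisfies ρ(M) < 1. -/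
open scoped ENNReal

/-- Spectral radius of a real matrix: supremum of `‖λ‖` over the complex spectrum. -/
noncomputable def specRad {n : ℕ} (M : Matrix (Fin n) (Fin n) ℝ) : ℝ≥0∞ :=
  spectralRadius ℂ (M.map (algebraMap ℝ ℂ))

/-- Largest eigenvalue of a Hermitian (symmetric) real matrix. -/
noncomputable def eigMax {n : ℕ} {P : Matrix (Fin n) (Fin n) ℝ} (hP : P.IsHermitian) : ℝ :=
  ⨆ i, hP.eigenvalues i

/-- Smallest eigenvalue of a Hermitian (symmetric) real matrix. -/
noncomputable def eigMin {n : ℕ} {P : Matrix (Fin n) (Fin n) ℝ} (hP : P.IsHermitian) : ℝ :=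
  ⨅ i, hP.eigenvalues i

attribute [local instance] Matrix.linftyOpNormedRing Matrix.linftyOpNormedAlgebra

lemma specRad_lt_one_of {a b c d : ℝ} (ha0 : 0 ≤ a) (ha1 : a < 1) (hb : 0 < b) (hc : 0 < c)
    (hd0 : 0 ≤ d) (hd1 : d < 1) (h : b * c < (1 - a) * (1 - d)) :
    specRad !![a, b; c, d] < 1 := by
  have h1a : (0:ℝ) < 1 - a := by linarith
  have h1d : (0:ℝ) < 1 - d := by linarith
  have hdiv : b / (1 - a) < (1 - d) / c := by
    rw [div_lt_div_iff₀ h1a hc]; linarith [h]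
  obtain ⟨t, ht1, ht2⟩ := exists_between hdiv
  have ht0 : 0 < t := lt_trans (div_pos hb h1a) ht1
  have htne : (t : ℂ) ≠ 0 := by exact_mod_cast ht0.ne'
  have hbt : b / t < 1 - a := by
    rw [div_lt_iff₀ ht0]
    calc b = (b / (1-a)) * (1-a) := by field_simp
    _ < t * (1-a) := by apply mul_lt_mul_of_pos_right ht1 h1a
    _ = (1-a) * t := mul_comm _ _
  have hct : c * t < 1 - d := by
    calc c * t < c * ((1-d)/c) := by exact mul_lt_mul_of_pos_left ht2 hc
    _ = 1 - d := by field_simp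
  -- the unit
  set u : (Matrix (Fin 2) (Fin 2) ℂ)ˣ :=
    { val := Matrix.diagonal ![1, (t:ℂ)]
      inv := Matrix.diagonal ![1, (t:ℂ)⁻¹]
      val_inv := by
        rw [Matrix.diagonal_mul_diagonal]
        ext i j
        fin_cases i <;> fin_cases j <;>
          simp [Matrix.diagonal, mul_inv_cancel₀ htne]
      inv_val := by
        rw [Matrix.diagonal_mul_diagonal]
        ext i j
        fin_cases i <;> fin_cases j <;>
          simp [Matrix.diagonal, inv_mul_cancel₀ htne] } with hu
  set A : Matrix (Fin 2) (Fin 2) ℂ := (!![a, b; c, d]).map (algebraMap ℝ ℂ) with hA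
  have hconj : (u : Matrix (Fin 2) (Fin 2) ℂ) * A * ((↑(u⁻¹) : Matrix (Fin 2) (Fin 2) ℂ))
      = !![(a:ℂ), b * (t:ℂ)⁻¹; c * t, d] := by
    ext i j
    fin_cases i <;> fin_cases j <;>
      simp [hA, hu, Matrix.mul_apply, Fin.sum_univ_two, Matrix.diagonal] <;>
      first
        | ring1
        | field_simp
  have hrad : specRad !![a, b; c, d]
      = spectralRadius ℂ ((u : Matrix (Fin 2) (Fin 2) ℂ) * A * ((↑(u⁻¹) : Matrix (Fin 2) (Fin 2) ℂ))) := by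
    unfold specRad spectralRadius
    rw [spectrum.units_conjugate]
  rw [hrad, hconj]
  refine lt_of_le_of_lt (spectrum.spectralRadius_le_nnnorm (𝕜 := ℂ) _) ?_
  have hnorm : ‖!![(a:ℂ), b * (t:ℂ)⁻¹; c * t, d]‖₊ < 1 := by
    rw [Matrix.linfty_opNNNorm_def]
    refine Finset.sup_lt_iff (by norm_num) |>.mpr fun i _ => ?_
    have hbt' : b * t⁻¹ < 1 - a := by rw [← div_eq_mul_inv]; exact hbt
    fin_cases i <;>
    · simp only [Fin.sum_univ_two, Matrix.of_apply, Matrix.cons_val', Matrix.cons_val_zero,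
        Matrix.cons_val_one, Matrix.head_cons, Matrix.empty_val', Matrix.cons_val_fin_one,
        Matrix.head_fin_const, ← Complex.ofReal_inv, ← Complex.ofReal_mul, Complex.nnnorm_real]
      rw [← NNReal.coe_lt_coe]
      push_cast
      simp only [← Complex.ofReal_inv, ← Complex.ofReal_mul, Complex.norm_real,
        Real.norm_eq_abs]
      rw [abs_of_nonneg (by positivity), abs_of_nonneg (by positivity)]
      first
        | linarith [hbt']
        | linarith [hct]
  exact_mod_cast hnorm

set_option maxHeartbeats 1000000 in
/-- **Lemma 2** (parameter selection): under the stated bounds on the sampling period `τ`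
and relaxation parameter `ε`, the comparison matrix `M` has spectral radius less than one. -/
theorem stmt0 {nu : ℕ} (hnu : 0 < nu)
    (P : Matrix (Fin nu) (Fin nu) ℝ) (hP : P.PosDef)
    (α₁ α₂ μ cT ℓT ℓg ℓx τ ε : ℝ)
    (hα₁ : 0 < α₁) (hα : α₁ ≤ α₂) (hμ : 0 < μ)
    (hcT : cT ∈ Set.Ioo (0:ℝ) 1) (hℓT : 0 < ℓT) (hℓg : 0 < ℓg) (hℓx : 0 < ℓx)
    (hτ0 : 0 < τ) (hτ : Real.log (α₂ / α₁) / μ < τ)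
    (hε0 : 0 < ε) (hε1 : ε ≤ 1)
    (hεbar : ε < Real.exp (τ*μ/2) * (Real.exp (τ*μ/2) - Real.sqrt (α₂/α₁)) /
      (ℓg * ℓx * ℓT * (1 + (eigMax hP.1 / eigMin hP.1) * (1 + cT) / (1 - cT)) * (α₂/α₁))) :
    specRad
      !![1 - ε*(1 - cT),
         (eigMax hP.1 * ℓT * ℓg / Real.sqrt α₁) * ε * (Real.sqrt (α₂/α₁) * Real.exp (-(τ*μ)/2));
         (eigMin hP.1)⁻¹ * (1 + cT) * ε * (Real.sqrt α₁ * ℓx) *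
           (Real.sqrt (α₂/α₁) * Real.exp (-(τ*μ)/2)),
         (1 + ((Real.sqrt α₁ * ℓx) * ℓT * ℓg / Real.sqrt α₁) * ε *
             (Real.sqrt (α₂/α₁) * Real.exp (-(τ*μ)/2))) *
           (Real.sqrt (α₂/α₁) * Real.exp (-(τ*μ)/2))]
      < 1 := by
  obtain ⟨hcT0, hcT1⟩ := hcT
  have h1cT : 0 < 1 - cT := by linarith
  have : Nonempty (Fin nu) := ⟨⟨0, hnu⟩⟩
  -- eigenvalue bounds
  have hev : ∀ i, 0 < hP.1.eigenvalues i := hP.eigenvalues_pos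
  have hm_pos : 0 < eigMin hP.1 := by
    obtain ⟨i, hi⟩ := exists_eq_ciInf_of_finite (f := hP.1.eigenvalues)
    rw [eigMin, ← hi]; exact hev i
  have hM_pos : 0 < eigMax hP.1 := by
    obtain ⟨i, hi⟩ := exists_eq_ciSup_of_finite (f := hP.1.eigenvalues)
    rw [eigMax, ← hi]; exact hev i
  set lM := eigMax hP.1
  set lm := eigMin hP.1
  set κ := lM / lm with hκ_def
  have hκ : 0 < κ := div_pos hM_pos hm_pos
  -- scalar abbreviations
  set s := Real.sqrt (α₂/α₁) with hs_def
  set E := Real.exp (τ*μ/2) with hE_def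
  set e := Real.exp (-(τ*μ)/2) with he_def
  have hr : 0 < α₂/α₁ := div_pos (lt_of_lt_of_le hα₁ hα) hα₁
  have hs : 0 < s := Real.sqrt_pos.mpr hr
  have hE : 0 < E := Real.exp_pos _
  have he : 0 < e := Real.exp_pos _
  have heE : E * e = 1 := by
    rw [hE_def, he_def, ← Real.exp_add, show τ*μ/2 + -(τ*μ)/2 = 0 by ring, Real.exp_zero]
  have hs2 : s^2 = α₂/α₁ := Real.sq_sqrt hr.le
  have hsE : s < E := by
    have hlog : Real.log (α₂/α₁) < τ * μ := by
      have := (div_lt_iff₀ hμ).mp hτ; linarith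
    have h2 : α₂/α₁ < E^2 := by
      rw [hE_def, ← Real.exp_nat_mul]
      calc α₂/α₁ = Real.exp (Real.log (α₂/α₁)) := (Real.exp_log hr).symm
      _ < Real.exp ((2:ℕ) * (τ*μ/2)) := by
          apply Real.exp_lt_exp.mpr; push_cast; linarith
    have h3 := Real.sqrt_lt_sqrt hr.le h2
    rwa [Real.sqrt_sq hE.le] at h3
  set cW := s * e with hcW_def
  have hcW : 0 < cW := mul_pos hs he
  have hcW1 : cW < 1 := by
    calc cW = s * e := rfl
    _ < E * e := by exact mul_lt_mul_of_pos_right hsE he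
    _ = 1 := heE
  have hsa : Real.sqrt α₁ ≠ 0 := (Real.sqrt_pos.mpr hα₁).ne'
  have hsa0 : 0 < Real.sqrt α₁ := Real.sqrt_pos.mpr hα₁
  set K := 1 + κ * (1 + cT) / (1 - cT) with hK_def
  have hK1 : 1 ≤ K := by
    have : 0 < κ * (1 + cT) / (1 - cT) := by positivity
    rw [hK_def]; linarith
  have hD : 0 < ℓg * ℓx * ℓT * K * (α₂/α₁) := by positivity
  -- key inequality
  have hεD : ε * (ℓg * ℓx * ℓT * K * (α₂/α₁)) < E * (E - s) := by
    have := (lt_div_iff₀ hD).mp hεbar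
    linarith
  have hcW2 : cW^2 = (α₂/α₁) * e^2 := by rw [hcW_def]; nlinarith [hs2]
  have h_key : ℓg * ℓx * ℓT * K * ε * cW^2 < 1 - cW := by
    have h1 : ε * (ℓg * ℓx * ℓT * K * (α₂/α₁)) * e^2 < E * (E - s) * e^2 :=
      mul_lt_mul_of_pos_right hεD (by positivity)
    have h2 : E * (E - s) * e^2 = 1 - cW := by
      rw [hcW_def]
      linear_combination (E*e + 1 - s*e) * heE
    calc ℓg * ℓx * ℓT * K * ε * cW^2 = ε * (ℓg * ℓx * ℓT * K * (α₂/α₁)) * e^2 := by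
          rw [hcW2]; ring
    _ < E * (E - s) * e^2 := h1
    _ = 1 - cW := h2
  have h_key2 : ℓg * ℓx * ℓT * ((1-cT) + κ*(1+cT)) * ε * cW^2 < (1 - cW) * (1 - cT) := by
    have h3 := mul_lt_mul_of_pos_right h_key h1cT
    calc ℓg * ℓx * ℓT * ((1-cT) + κ*(1+cT)) * ε * cW^2
        = (ℓg * ℓx * ℓT * K * ε * cW^2) * (1 - cT) := by
          rw [hK_def]; field_simp
    _ < (1 - cW) * (1 - cT) := h3
  -- apply the 2x2 criterion
  apply specRad_lt_one_of
  · nlinarith [mul_le_one₀ hε1 h1cT.le (by linarith : 1 - cT ≤ 1)]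
  · nlinarith [mul_pos hε0 h1cT]
  · positivity
  · positivity
  · positivity
  · -- d < 1
    have hXK : ℓg * ℓx * ℓT * ε * cW^2 ≤ ℓg * ℓx * ℓT * K * ε * cW^2 := by
      nlinarith [hK1, mul_pos (mul_pos (mul_pos hℓg hℓx) hℓT) (mul_pos hε0 (pow_pos hcW 2))]
    have hd : (1 + ((Real.sqrt α₁ * ℓx) * ℓT * ℓg / Real.sqrt α₁) * ε * cW) * cW
        = cW + ℓx * ℓT * ℓg * ε * cW^2 := by
      field_simp
    rw [hd]
    nlinarith [h_key, hXK]
  · -- bc < (1-a)(1-d)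
    have hbc : (lM * ℓT * ℓg / Real.sqrt α₁) * ε * cW *
        (lm⁻¹ * (1 + cT) * ε * (Real.sqrt α₁ * ℓx) * cW)
        = κ * (1 + cT) * ℓT * ℓg * ℓx * ε^2 * cW^2 := by
      rw [hκ_def]; field_simp
    have hd : (1 + ((Real.sqrt α₁ * ℓx) * ℓT * ℓg / Real.sqrt α₁) * ε * cW) * cW
        = cW + ℓx * ℓT * ℓg * ε * cW^2 := by
      field_simp
    rw [hbc, hd]
    have h4 := mul_lt_mul_of_pos_left h_key2 hε0
    nlinarith [h4]
end

section
/- Let α₂ ≥ α₁ > 0, μ > 0, τ > 0, ℓ_x > 0, let U ⊆ ℝ^{n_u} and W ⊆ ℝ^{n_w} be sets, let x_ss : ℝ^{n_u} × ℝ^{n_w} → ℝ^{n_x} satisfy ‖x_ss(u,w) − x_ss(u',w)‖ ≤ ℓ_x‖u − u'‖ for all u, u' ∈ U and w ∈ W, let V : ℝ^{n_x} × U × W → ℝ satisfy α₁‖x − x_ss(u,w)‖² ≤ V(x,u,w) ≤ α₂‖x − x_ss(u,w)‖² for all x, u ∈ U, w ∈ W, and let σ_c : ℝ_{≥0} → ℝ_{≥0}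 be a K-function. Let x^k, x^{k+1} ∈ ℝ^{n_x}, u^k, u^{k+1} ∈ U, w^k, w^{k+1} ∈ W, and z^k ≥ 0 be such that for every fixed u ∈ U, V(x^{k+1}, u, w^{k+1}) ≤ e^{-μτ} V(x^k, u, w^k) + τ·σ_c(z^k). Then, with W(x,u,w) := √(V(x,u,w)), c_W := √(α₂/α₁)·e^{-τμ/2}, and ℓ_W := √α₁·ℓ_x, it holds that W(x^{k+1}, u^{k+1}, w^{k+1}) ≤ c_W·W(x^k, u^k, w^k) + c_W·ℓ_W·‖u^{k+1} − u^k‖ + √τ·√(σ_c(z^k)). -/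
/-- A `K`-function: continuous, strictly increasing on `[0,∞)` and vanishing at `0`. -/
def IsKFunction (γ : ℝ → ℝ) : Prop :=
  ContinuousOn γ (Set.Ici 0) ∧ StrictMonoOn γ (Set.Ici 0) ∧ γ 0 = 0

lemma sqrt_add_le' (x y : ℝ) : Real.sqrt (x + y) ≤ Real.sqrt x + Real.sqrt y := by
  have hx := Real.sqrt_nonneg x
  have hy := Real.sqrt_nonneg y
  have hsq : ∀ z : ℝ, z ≤ (Real.sqrt z)^2 := by
    intro z
    rcases le_or_gt 0 z with h | h
    · rw [Real.sq_sqrt h]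
    · have : Real.sqrt z = 0 := Real.sqrt_eq_zero_of_nonpos h.le
      rw [this]; nlinarith
  calc Real.sqrt (x + y) ≤ Real.sqrt ((Real.sqrt x + Real.sqrt y)^2) := by
        apply Real.sqrt_le_sqrt
        nlinarith [hsq x, hsq y]
    _ = Real.sqrt x + Real.sqrt y := Real.sqrt_sq (by positivity)

/-- **Lemma 1** (discrete-time content): one-step decay bound for `W = √V`. -/
theorem stmt1 {nx nu nw : ℕ}
    (α₁ α₂ μ τ ℓx : ℝ) (hα₁ : 0 < α₁) (hα : α₁ ≤ α₂) (hμ : 0 < μ) (hτ : 0 < τ) (hℓx : 0 < ℓx)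
    (U : Set (EuclideanSpace ℝ (Fin nu))) (Wd : Set (EuclideanSpace ℝ (Fin nw)))
    (xss : EuclideanSpace ℝ (Fin nu) → EuclideanSpace ℝ (Fin nw) → EuclideanSpace ℝ (Fin nx))
    (hxss : ∀ u ∈ U, ∀ u' ∈ U, ∀ w ∈ Wd, ‖xss u w - xss u' w‖ ≤ ℓx * ‖u - u'‖)
    (V : EuclideanSpace ℝ (Fin nx) → EuclideanSpace ℝ (Fin nu) → EuclideanSpace ℝ (Fin nw) → ℝ)
    (hV : ∀ x, ∀ u ∈ U, ∀ w ∈ Wd,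
      α₁ * ‖x - xss u w‖^2 ≤ V x u w ∧ V x u w ≤ α₂ * ‖x - xss u w‖^2)
    (σc : ℝ → ℝ) (hσc : IsKFunction σc)
    (xk xk1 : EuclideanSpace ℝ (Fin nx))
    (uk uk1 : EuclideanSpace ℝ (Fin nu)) (huk : uk ∈ U) (huk1 : uk1 ∈ U)
    (wk wk1 : EuclideanSpace ℝ (Fin nw)) (hwk : wk ∈ Wd) (hwk1 : wk1 ∈ Wd)
    (zk : ℝ) (hzk : 0 ≤ zk)
    (hdecay : ∀ u ∈ U, V xk1 u wk1 ≤ Real.exp (-(μ*τ)) * V xk u wk + τ * σc zk) :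
    Real.sqrt (V xk1 uk1 wk1) ≤
      (Real.sqrt (α₂/α₁) * Real.exp (-(τ*μ)/2)) * Real.sqrt (V xk uk wk)
        + (Real.sqrt (α₂/α₁) * Real.exp (-(τ*μ)/2)) * (Real.sqrt α₁ * ℓx) * ‖uk1 - uk‖
        + Real.sqrt τ * Real.sqrt (σc zk) := by
  -- notation
  set d := ‖xk - xss uk wk‖ with hd
  set e := ‖uk1 - uk‖ with he
  have hd0 : 0 ≤ d := norm_nonneg _
  have he0 : 0 ≤ e := norm_nonneg _
  have hb : 0 ≤ σc zk := by
    have := (hσc.2.1.monotoneOn) (Set.mem_Ici.mpr le_rfl) (Set.mem_Ici.mpr hzk) hzk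
    rw [hσc.2.2] at this; exact this
  -- step 1: decay at u = uk1
  have h1 : V xk1 uk1 wk1 ≤ Real.exp (-(μ*τ)) * V xk uk1 wk + τ * σc zk := hdecay uk1 huk1
  have hmid0 : 0 ≤ V xk uk1 wk := by
    have := (hV xk uk1 huk1 wk hwk).1
    nlinarith [norm_nonneg (xk - xss uk1 wk), sq_nonneg ‖xk - xss uk1 wk‖]
  have h2 : Real.sqrt (V xk1 uk1 wk1)
      ≤ Real.exp (-(μ*τ)/2) * Real.sqrt (V xk uk1 wk) + Real.sqrt τ * Real.sqrt (σc zk) := by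
    calc Real.sqrt (V xk1 uk1 wk1)
        ≤ Real.sqrt (Real.exp (-(μ*τ)) * V xk uk1 wk + τ * σc zk) := Real.sqrt_le_sqrt h1
      _ ≤ Real.sqrt (Real.exp (-(μ*τ)) * V xk uk1 wk) + Real.sqrt (τ * σc zk) :=
          sqrt_add_le' _ _
      _ = Real.exp (-(μ*τ)/2) * Real.sqrt (V xk uk1 wk) + Real.sqrt τ * Real.sqrt (σc zk) := by
          rw [Real.sqrt_mul (Real.exp_nonneg _), Real.sqrt_mul hτ.le, Real.exp_half]
  -- step 2: bound √(V xk uk1 wk)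
  have hxdiff : ‖xk - xss uk1 wk‖ ≤ d + ℓx * e := by
    have h3 : ‖xss uk wk - xss uk1 wk‖ ≤ ℓx * ‖uk - uk1‖ := hxss uk huk uk1 huk1 wk hwk
    rw [norm_sub_rev uk] at h3
    calc ‖xk - xss uk1 wk‖ = ‖(xk - xss uk wk) + (xss uk wk - xss uk1 wk)‖ := by abel_nf
      _ ≤ d + ‖xss uk wk - xss uk1 wk‖ := norm_add_le _ _
      _ ≤ d + ℓx * e := by linarith
  have h4 : Real.sqrt (V xk uk1 wk) ≤ Real.sqrt α₂ * (d + ℓx * e) := by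
    have := (hV xk uk1 huk1 wk hwk).2
    calc Real.sqrt (V xk uk1 wk) ≤ Real.sqrt (α₂ * ‖xk - xss uk1 wk‖^2) := Real.sqrt_le_sqrt this
      _ = Real.sqrt α₂ * ‖xk - xss uk1 wk‖ := by
          rw [Real.sqrt_mul (by linarith), Real.sqrt_sq (norm_nonneg _)]
      _ ≤ Real.sqrt α₂ * (d + ℓx * e) := by
          exact mul_le_mul_of_nonneg_left hxdiff (Real.sqrt_nonneg _)
  -- step 3: bound d by √(V xk uk wk)
  have h5 : Real.sqrt α₁ * d ≤ Real.sqrt (V xk uk wk) := by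
    have := (hV xk uk huk wk hwk).1
    calc Real.sqrt α₁ * d = Real.sqrt (α₁ * d^2) := by
          rw [Real.sqrt_mul hα₁.le, Real.sqrt_sq hd0]
      _ ≤ Real.sqrt (V xk uk wk) := Real.sqrt_le_sqrt this
  -- combine
  have hsa1 : (0:ℝ) < Real.sqrt α₁ := Real.sqrt_pos.mpr hα₁
  have hE : Real.exp (-(μ*τ)/2) = Real.exp (-(τ*μ)/2) := by ring_nf
  have hsplit : Real.sqrt (α₂/α₁) * Real.sqrt α₁ = Real.sqrt α₂ := by
    rw [← Real.sqrt_mul (div_nonneg (by linarith) hα₁.le), div_mul_cancel₀ _ hα₁.ne']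
  have h6 : Real.sqrt α₂ * d ≤ Real.sqrt (α₂/α₁) * Real.sqrt (V xk uk wk) := by
    rw [← hsplit, mul_assoc]
    exact mul_le_mul_of_nonneg_left h5 (Real.sqrt_nonneg _)
  have hexp : (0:ℝ) ≤ Real.exp (-(μ*τ)/2) := (Real.exp_pos _).le
  calc Real.sqrt (V xk1 uk1 wk1)
      ≤ Real.exp (-(μ*τ)/2) * Real.sqrt (V xk uk1 wk) + Real.sqrt τ * Real.sqrt (σc zk) := h2
    _ ≤ Real.exp (-(μ*τ)/2) * (Real.sqrt α₂ * (d + ℓx * e)) + Real.sqrt τ * Real.sqrt (σc zk) := by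
        gcongr
    _ = Real.exp (-(μ*τ)/2) * (Real.sqrt α₂ * d) + Real.exp (-(μ*τ)/2) * (Real.sqrt α₂ * ℓx * e)
          + Real.sqrt τ * Real.sqrt (σc zk) := by ring
    _ ≤ Real.exp (-(μ*τ)/2) * (Real.sqrt (α₂/α₁) * Real.sqrt (V xk uk wk))
          + Real.exp (-(μ*τ)/2) * (Real.sqrt α₂ * ℓx * e)
          + Real.sqrt τ * Real.sqrt (σc zk) := by gcongr
    _ = (Real.sqrt (α₂/α₁) * Real.exp (-(τ*μ)/2)) * Real.sqrt (V xk uk wk)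
          + (Real.sqrt (α₂/α₁) * Real.exp (-(τ*μ)/2)) * (Real.sqrt α₁ * ℓx) * e
          + Real.sqrt τ * Real.sqrt (σc zk) := by
        rw [← hE, ← hsplit]; ring
end

section
/- Consider: compact convex U ⊆ ℝ^{n_u} and compact W ⊆ ℝ^{n_w}; x_ss : ℝ^{n_u} × ℝ^{n_w} → ℝ^{n_x} with ‖x_ss(u,w) − x_ss(u',w)‖ ≤ ℓ_x‖u − u'‖ for u, u' ∈ U, w ∈ W; g : ℝ^{n_x} × ℝ^{n_w} → ℝ^{n_y} with ‖g(x,w) − g(x',w)‖ ≤ ℓ_g‖x − x'‖; the steady-state input-output map h(u,w) := g(x_ss(u,w), w); V : ℝ^{n_x} × U × W → ℝ with α₁‖x − x_ss(u,w)‖² ≤ V(x,u,w) ≤ α₂‖x − x_ss(u,w)‖² (α₂ ≥ α₁ > 0); a K-function σ_c; a symmetric positive definite matrix P; constants μ > 0, c_T ∈ (0,1), ℓ_T, ℓ_{u*} > 0; a map T : ℝ^{n_u} × ℝ^{n_y} → ℝ^{n_u} with ‖T(u,y) − T(u,y')‖ ≤ ℓ_T‖y − y'‖ for all u, y, y'; and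 a map u* : W → U such that, with T̃(u,w) := T(u, h(u,w)), for every w ∈ W: u*(w) = T̃(u*(w), w), ‖T̃(u,w) − u*(w)‖_P ≤ c_T‖u − u*(w)‖_P for all u ∈ U, and ‖u*(w') − u*(w)‖ ≤ ℓ_{u*}‖w' − w‖. Let τ > log(α₂/α₁)/μ and ε ∈ (0,1] with ε < ε̄(τ) := e^{τμ/2}(e^{τμ/2} − √(α₂/α₁)) / (ℓ_g·ℓ_x·ℓ_T·(1 + κ(P)(1 + c_T)/(1 − c_T))·(α₂/α₁)). Let sequences x^k ∈ ℝ^{n_x}, u^k ∈ U, w^k ∈ W, z^k ≥ 0 satisfy: ‖w^{k+1} − w^k‖ ≤ τ·z^k; for every fixed u ∈ U, V(x^{k+1}, u, w^{k+1}) ≤ e^{−μτ}·V(x^k, u, w^k) + τ·σ_c(z^k); y^{k+1} = g(x^{k+1}, w^{k+1}); and u^{k+1} = (1 − ε)·u^k + ε·T(u^k, y^{k+1}). Then there exist constants η₁, η₂ > 0 and c_M ∈ [0,1) such that, with δx^k := x^k − x_ss(u^k, w^k), δu^k := u^k − u*(w^k), c_W := √(α₂/α₁)e^{−τμ/2}, and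 σ := √σ_c, for all k: ‖(δx^k, δu^k)‖ ≤ η₁·c_M^k·‖(δx^0, δu^0)‖ + γ(sup_{0 ≤ s ≤ k−1} z^s), where γ(ζ) := η₂·(c_M/(1 − c_M))·‖(ℓ_{u*}·τ·ζ, (√τ/c_W)·σ(ζ))‖ is a K-function. -/
/-- The `P`-weighted norm `‖a‖_P = √(aᵀ P a)`. -/
noncomputable def pnorm {n : ℕ} (P : Matrix (Fin n) (Fin n) ℝ) (a : EuclideanSpace ℝ (Fin n)) : ℝ :=
  Real.sqrt (dotProduct (fun i => a i) (P.mulVec fun i => a i))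


namespace StmtAux

theorem sqrt_add_le' {X Y : ℝ} (hX : 0 ≤ X) (hY : 0 ≤ Y) :
    Real.sqrt (X + Y) ≤ Real.sqrt X + Real.sqrt Y := by
  have h1 : X + Y ≤ (Real.sqrt X + Real.sqrt Y)^2 := by
    have := Real.sq_sqrt hX; have := Real.sq_sqrt hY
    have := Real.sqrt_nonneg X; have := Real.sqrt_nonneg Y
    nlinarith
  calc Real.sqrt (X + Y) ≤ Real.sqrt ((Real.sqrt X + Real.sqrt Y)^2) := Real.sqrt_le_sqrt h1
    _ = Real.sqrt X + Real.sqrt Y := Real.sqrt_sq (by positivity)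

theorem sqrt_add_sq_le' {x y : ℝ} (hx : 0 ≤ x) (hy : 0 ≤ y) :
    Real.sqrt (x^2 + y^2) ≤ x + y := by
  calc Real.sqrt (x^2 + y^2) ≤ Real.sqrt ((x+y)^2) := Real.sqrt_le_sqrt (by nlinarith)
    _ = x + y := Real.sqrt_sq (by positivity)

theorem le_sqrt_add_sq_left {x y : ℝ} (hx : 0 ≤ x) : x ≤ Real.sqrt (x^2 + y^2) := by
  calc x = Real.sqrt (x^2) := (Real.sqrt_sq hx).symm
    _ ≤ Real.sqrt (x^2 + y^2) := Real.sqrt_le_sqrt (by nlinarith)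

theorem le_sqrt_add_sq_right {x y : ℝ} (hy : 0 ≤ y) : y ≤ Real.sqrt (x^2 + y^2) := by
  calc y = Real.sqrt (y^2) := (Real.sqrt_sq hy).symm
    _ ≤ Real.sqrt (x^2 + y^2) := Real.sqrt_le_sqrt (by nlinarith)

section pn
variable {n : ℕ} {P : Matrix (Fin n) (Fin n) ℝ}

theorem conj_diag_eq (hP : P.IsHermitian) (c : ℝ) :
    (hP.eigenvectorUnitary : Matrix (Fin n) (Fin n) ℝ) *
      Matrix.diagonal (fun i => c - hP.eigenvalues i) *
      star (hP.eigenvectorUnitary : Matrix (Fin n) (Fin n) ℝ)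
    = c • (1 : Matrix (Fin n) (Fin n) ℝ) - P := by
  set U : Matrix (Fin n) (Fin n) ℝ := (hP.eigenvectorUnitary : Matrix (Fin n) (Fin n) ℝ) with hUdef
  have hU : U * star U = 1 := Matrix.mem_unitaryGroup_iff.mp hP.eigenvectorUnitary.2
  have hD : Matrix.diagonal (fun i => c - hP.eigenvalues i)
      = c • (1 : Matrix (Fin n) (Fin n) ℝ) - Matrix.diagonal hP.eigenvalues := by
    ext i j
    by_cases h : i = j <;> simp [Matrix.diagonal, Matrix.one_apply, h]
  have hspec := hP.spectral_theorem
  have hofReal : (RCLike.ofReal ∘ hP.eigenvalues : Fin n → ℝ) = hP.eigenvalues := by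
    funext i; simp [RCLike.ofReal]
  rw [hD, Matrix.mul_sub, Matrix.sub_mul, Matrix.mul_smul, Matrix.mul_one, Matrix.smul_mul, hU]
  congr 1
  conv_rhs => rw [hspec, hofReal, Unitary.conjStarAlgAut_apply]

theorem quad_le_eigMax (hP : P.IsHermitian) (a : Fin n → ℝ) :
    dotProduct a (P.mulVec a) ≤ eigMax hP * dotProduct a a := by
  have hc : ∀ i, hP.eigenvalues i ≤ eigMax hP := fun i =>
    le_ciSup (Set.Finite.bddAbove (Set.finite_range _)) i
  have hps : (eigMax hP • (1 : Matrix (Fin n) (Fin n) ℝ) - P).PosSemidef := by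
    rw [← conj_diag_eq hP (eigMax hP)]
    exact (Matrix.PosSemidef.diagonal (fun i => by simpa using hc i)).mul_mul_conjTranspose_same _
  have h0 := hps.dotProduct_mulVec_nonneg a
  simp only [star_trivial, Matrix.sub_mulVec, Matrix.smul_mulVec, Matrix.one_mulVec,
    dotProduct_sub, dotProduct_smul, smul_eq_mul] at h0
  linarith

theorem eigMin_quad_le (hP : P.IsHermitian) (a : Fin n → ℝ) :
    eigMin hP * dotProduct a a ≤ dotProduct a (P.mulVec a) := by
  have hc : ∀ i, eigMin hP ≤ hP.eigenvalues i := fun i =>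
    ciInf_le (Set.Finite.bddBelow (Set.finite_range _)) i
  have hps : (P - eigMin hP • (1 : Matrix (Fin n) (Fin n) ℝ)).PosSemidef := by
    have h := conj_diag_eq hP (eigMin hP)
    have h2 : P - eigMin hP • (1 : Matrix (Fin n) (Fin n) ℝ)
        = (hP.eigenvectorUnitary : Matrix (Fin n) (Fin n) ℝ) *
          Matrix.diagonal (fun i => hP.eigenvalues i - eigMin hP) *
          star (hP.eigenvectorUnitary : Matrix (Fin n) (Fin n) ℝ) := by
      have h3 : Matrix.diagonal (fun i => hP.eigenvalues i - eigMin hP)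
          = - Matrix.diagonal (fun i => eigMin hP - hP.eigenvalues i) := by
        ext i j; by_cases hij : i = j <;> simp [Matrix.diagonal, hij]
      rw [h3, Matrix.mul_neg, Matrix.neg_mul, h]
      abel
    rw [h2]
    exact (Matrix.PosSemidef.diagonal (fun i => by simpa using hc i)).mul_mul_conjTranspose_same _
  have h0 := hps.dotProduct_mulVec_nonneg a
  simp only [star_trivial, Matrix.sub_mulVec, Matrix.smul_mulVec, Matrix.one_mulVec,
    dotProduct_sub, dotProduct_smul, smul_eq_mul] at h0
  linarith

theorem eigMin_pos' (hP : P.PosDef) (hn : 0 < n) : 0 < eigMin hP.1 := by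
  have hne : Nonempty (Fin n) := ⟨⟨0, hn⟩⟩
  obtain ⟨a, ha⟩ := Finite.exists_min hP.1.eigenvalues
  exact lt_of_lt_of_le (Matrix.PosDef.eigenvalues_pos hP a) (le_ciInf ha)

theorem eigMin_le_eigMax' (hP : P.IsHermitian) (hn : 0 < n) : eigMin hP ≤ eigMax hP := by
  have hne : Nonempty (Fin n) := ⟨⟨0, hn⟩⟩
  exact le_trans (ciInf_le (Set.Finite.bddBelow (Set.finite_range _)) (Classical.arbitrary _))
    (le_ciSup (Set.Finite.bddAbove (Set.finite_range _)) _)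

noncomputable def psqrt (hP : P.PosDef) : Matrix (Fin n) (Fin n) ℝ :=
  (hP.1.eigenvectorUnitary : Matrix (Fin n) (Fin n) ℝ) *
    Matrix.diagonal (fun i => Real.sqrt (hP.1.eigenvalues i)) *
    star (hP.1.eigenvectorUnitary : Matrix (Fin n) (Fin n) ℝ)

theorem psqrt_mul_self (hP : P.PosDef) : psqrt hP * psqrt hP = P := by
  set U : Matrix (Fin n) (Fin n) ℝ := (hP.1.eigenvectorUnitary : Matrix (Fin n) (Fin n) ℝ) with hUdef
  set D := Matrix.diagonal (fun i => Real.sqrt (hP.1.eigenvalues i)) with hDdef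
  have hU' : star U * U = 1 := Matrix.mem_unitaryGroup_iff'.mp hP.1.eigenvectorUnitary.2
  have hD : D * D = Matrix.diagonal (RCLike.ofReal ∘ hP.1.eigenvalues) := by
    rw [hDdef, Matrix.diagonal_mul_diagonal]; congr 1; funext i
    simp [Real.mul_self_sqrt (hP.eigenvalues_pos i).le]
  have h1 : psqrt hP * psqrt hP = U * (D * D) * star U := by
    rw [show psqrt hP * psqrt hP = U * D * (star U * U) * D * star U by
      simp only [psqrt, hUdef, hDdef, Matrix.mul_assoc], hU', Matrix.mul_one, Matrix.mul_assoc U D D]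
  rw [h1, hD]
  conv_rhs => rw [hP.1.spectral_theorem, Unitary.conjStarAlgAut_apply]

theorem psqrt_transpose (hP : P.PosDef) : (psqrt hP).transpose = psqrt hP := by
  rw [← Matrix.conjTranspose_eq_transpose_of_trivial]
  simp only [psqrt, Matrix.conjTranspose_mul, Matrix.star_eq_conjTranspose,
    Matrix.conjTranspose_conjTranspose, Matrix.diagonal_conjTranspose, Matrix.mul_assoc]
  congr 2

theorem quadform_eq (hP : P.PosDef) (a : Fin n → ℝ) :
    dotProduct a (P.mulVec a) =
      dotProduct ((psqrt hP).mulVec a) ((psqrt hP).mulVec a) := by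
  have h := psqrt_mul_self hP
  have hsym : (psqrt hP).transpose = psqrt hP := by
    exact psqrt_transpose hP
  conv_lhs => rw [← h]
  rw [← Matrix.mulVec_mulVec, Matrix.dotProduct_mulVec, ← Matrix.mulVec_transpose, hsym]

theorem dot_self_eq_normsq (a : EuclideanSpace ℝ (Fin n)) :
    dotProduct (fun i => a i) (fun i => a i) = ‖a‖^2 := by
  rw [dotProduct, ← real_inner_self_eq_norm_sq]
  simp [PiLp.inner_apply, RCLike.inner_apply]
  rw [EuclideanSpace.norm_eq, Real.sq_sqrt (by positivity)]
  congr 1; funext i; rw [Real.norm_eq_abs, sq_abs, sq]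

theorem pnorm_eq_norm (hP : P.PosDef) (a : EuclideanSpace ℝ (Fin n)) :
    pnorm P a = ‖(WithLp.equiv 2 (Fin n → ℝ)).symm ((psqrt hP).mulVec fun i => a i)‖ := by
  rw [pnorm, quadform_eq hP]
  rw [show ((psqrt hP).mulVec fun i => a i)
      = (fun i => ((WithLp.equiv 2 (Fin n → ℝ)).symm ((psqrt hP).mulVec fun i => a i)) i)
    from rfl, dot_self_eq_normsq]
  exact Real.sqrt_sq (norm_nonneg _)

theorem pnorm_nonneg (a : EuclideanSpace ℝ (Fin n)) : 0 ≤ pnorm P a := Real.sqrt_nonneg _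

theorem pnorm_triangle (hP : P.PosDef) (a b : EuclideanSpace ℝ (Fin n)) :
    pnorm P (a + b) ≤ pnorm P a + pnorm P b := by
  rw [pnorm_eq_norm hP, pnorm_eq_norm hP, pnorm_eq_norm hP]
  have : ((psqrt hP).mulVec fun i => (a + b) i)
      = ((psqrt hP).mulVec fun i => a i) + ((psqrt hP).mulVec fun i => b i) := by
    rw [← Matrix.mulVec_add]; rfl
  rw [this, WithLp.equiv_symm_apply, WithLp.toLp_add]
  exact norm_add_le _ _

theorem pnorm_smul (hP : P.PosDef) (c : ℝ) (a : EuclideanSpace ℝ (Fin n)) :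
    pnorm P (c • a) = |c| * pnorm P a := by
  rw [pnorm_eq_norm hP, pnorm_eq_norm hP]
  have : ((psqrt hP).mulVec fun i => (c • a) i)
      = c • ((psqrt hP).mulVec fun i => a i) := by
    rw [← Matrix.mulVec_smul]; rfl
  rw [this, WithLp.equiv_symm_apply, WithLp.toLp_smul, norm_smul, Real.norm_eq_abs]

theorem pnorm_le_eigMax (hP : P.PosDef) (h : 0 ≤ eigMax hP.1) (a : EuclideanSpace ℝ (Fin n)) :
    pnorm P a ≤ Real.sqrt (eigMax hP.1) * ‖a‖ := by
  rw [pnorm]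
  calc Real.sqrt (dotProduct (fun i => a i) (P.mulVec fun i => a i))
      ≤ Real.sqrt (eigMax hP.1 * ‖a‖^2) := by
        apply Real.sqrt_le_sqrt
        calc dotProduct (fun i => a i) (P.mulVec fun i => a i)
            ≤ eigMax hP.1 * dotProduct (fun i => a i) (fun i => a i) :=
              quad_le_eigMax hP.1 _
          _ = eigMax hP.1 * ‖a‖^2 := by rw [dot_self_eq_normsq]
    _ = Real.sqrt (eigMax hP.1) * ‖a‖ := by
        rw [Real.sqrt_mul h, Real.sqrt_sq (norm_nonneg a)]

theorem eigMin_le_pnorm (hP : P.PosDef) (h : 0 ≤ eigMin hP.1) (a : EuclideanSpace ℝ (Fin n)) :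
    Real.sqrt (eigMin hP.1) * ‖a‖ ≤ pnorm P a := by
  rw [pnorm]
  calc Real.sqrt (eigMin hP.1) * ‖a‖ = Real.sqrt (eigMin hP.1 * ‖a‖^2) := by
        rw [Real.sqrt_mul h, Real.sqrt_sq (norm_nonneg a)]
    _ ≤ Real.sqrt (dotProduct (fun i => a i) (P.mulVec fun i => a i)) := by
        apply Real.sqrt_le_sqrt
        calc eigMin hP.1 * ‖a‖^2
            = eigMin hP.1 * dotProduct (fun i => a i) (fun i => a i) := by
              rw [dot_self_eq_normsq]
          _ ≤ _ := eigMin_quad_le hP.1 _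

theorem norm_sub_le₃ {E : Type*} [SeminormedAddCommGroup E] (a b c : E) :
    ‖a - c‖ ≤ ‖a - b‖ + ‖b - c‖ := by
  have := dist_triangle a b c
  simpa [dist_eq_norm] using this

end pn
end StmtAux

set_option maxHeartbeats 1000000 in
/-- **Theorem 1**: input-to-state stability of the discrete-time closed loop obtained by
interconnecting the sampled plant with the relaxed equilibrium-seeking iteration, with
respect to the disturbance-rate bounds `z^k`. -/
theorem stmt3 {nx nu nw ny : ℕ} (hnu : 0 < nu)
    (U : Set (EuclideanSpace ℝ (Fin nu))) (Wd : Set (EuclideanSpace ℝ (Fin nw)))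
    (hUcomp : IsCompact U) (hUconv : Convex ℝ U) (hWcomp : IsCompact Wd)
    (xss : EuclideanSpace ℝ (Fin nu) → EuclideanSpace ℝ (Fin nw) → EuclideanSpace ℝ (Fin nx))
    (ℓx : ℝ)
    (hxss : ∀ u ∈ U, ∀ u' ∈ U, ∀ w ∈ Wd, ‖xss u w - xss u' w‖ ≤ ℓx * ‖u - u'‖)
    (g : EuclideanSpace ℝ (Fin nx) → EuclideanSpace ℝ (Fin nw) → EuclideanSpace ℝ (Fin ny))
    (ℓg : ℝ)
    (hg : ∀ x x' w, ‖g x w - g x' w‖ ≤ ℓg * ‖x - x'‖)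
    (V : EuclideanSpace ℝ (Fin nx) → EuclideanSpace ℝ (Fin nu) → EuclideanSpace ℝ (Fin nw) → ℝ)
    (α₁ α₂ : ℝ) (hα₁ : 0 < α₁) (hα : α₁ ≤ α₂)
    (hV : ∀ x, ∀ u ∈ U, ∀ w ∈ Wd,
      α₁ * ‖x - xss u w‖^2 ≤ V x u w ∧ V x u w ≤ α₂ * ‖x - xss u w‖^2)
    (σc : ℝ → ℝ) (hσc : IsKFunction σc)
    (P : Matrix (Fin nu) (Fin nu) ℝ) (hP : P.PosDef)
    (μ cT ℓT ℓus : ℝ) (hμ : 0 < μ) (hcT : cT ∈ Set.Ioo (0:ℝ) 1)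
    (hℓT : 0 < ℓT) (hℓus : 0 < ℓus)
    (T : EuclideanSpace ℝ (Fin nu) → EuclideanSpace ℝ (Fin ny) → EuclideanSpace ℝ (Fin nu))
    (hT : ∀ u y y', ‖T u y - T u y'‖ ≤ ℓT * ‖y - y'‖)
    (ustar : EuclideanSpace ℝ (Fin nw) → EuclideanSpace ℝ (Fin nu))
    (hustarU : ∀ w ∈ Wd, ustar w ∈ U)
    (hfix : ∀ w ∈ Wd, ustar w = T (ustar w) (g (xss (ustar w) w) w))
    (hcontr : ∀ w ∈ Wd, ∀ u ∈ U,
      pnorm P (T u (g (xss u w) w) - ustar w) ≤ cT * pnorm P (u - ustar w))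
    (hustarLip : ∀ w ∈ Wd, ∀ w' ∈ Wd, ‖ustar w' - ustar w‖ ≤ ℓus * ‖w' - w‖)
    (τ ε : ℝ)
    (hτ : Real.log (α₂/α₁) / μ < τ)
    (hε0 : 0 < ε) (hε1 : ε ≤ 1)
    (hεbar : ε < Real.exp (τ*μ/2) * (Real.exp (τ*μ/2) - Real.sqrt (α₂/α₁)) /
      (ℓg * ℓx * ℓT * (1 + (eigMax hP.1 / eigMin hP.1) * (1 + cT) / (1 - cT)) * (α₂/α₁)))
    (x : ℕ → EuclideanSpace ℝ (Fin nx)) (u : ℕ → EuclideanSpace ℝ (Fin nu))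
    (w : ℕ → EuclideanSpace ℝ (Fin nw)) (z : ℕ → ℝ)
    (huU : ∀ k, u k ∈ U) (hwW : ∀ k, w k ∈ Wd) (hz : ∀ k, 0 ≤ z k)
    (hwz : ∀ k, ‖w (k+1) - w k‖ ≤ τ * z k)
    (hVdec : ∀ k, ∀ v ∈ U,
      V (x (k+1)) v (w (k+1)) ≤ Real.exp (-(μ*τ)) * V (x k) v (w k) + τ * σc (z k))
    (hupd : ∀ k, u (k+1) = (1-ε) • u k + ε • T (u k) (g (x (k+1)) (w (k+1)))) :
    ∃ η₁ η₂ cM : ℝ, 0 < η₁ ∧ 0 < η₂ ∧ 0 ≤ cM ∧ cM < 1 ∧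
      IsKFunction (fun ζ => η₂ * (cM / (1 - cM)) *
        Real.sqrt ((ℓus * τ * ζ)^2 +
          ((Real.sqrt τ / (Real.sqrt (α₂/α₁) * Real.exp (-(τ*μ)/2))) * Real.sqrt (σc ζ))^2)) ∧
      ∀ k : ℕ,
        Real.sqrt (‖x k - xss (u k) (w k)‖^2 + ‖u k - ustar (w k)‖^2) ≤
          η₁ * cM^k * Real.sqrt (‖x 0 - xss (u 0) (w 0)‖^2 + ‖u 0 - ustar (w 0)‖^2) +
          η₂ * (cM / (1 - cM)) *
            Real.sqrt ((ℓus * τ * sSup (z '' Set.Iio k))^2 +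
              ((Real.sqrt τ / (Real.sqrt (α₂/α₁) * Real.exp (-(τ*μ)/2))) *
                Real.sqrt (σc (sSup (z '' Set.Iio k))))^2) := by
  
  classical
  obtain ⟨hσc_cont, hσc_mono, hσc_zero⟩ := hσc
  obtain ⟨hcT0, hcT1⟩ := hcT
  have hα₂ : (0:ℝ) < α₂ := lt_of_lt_of_le hα₁ hα
  have hr0 : (0:ℝ) < α₂/α₁ := by positivity
  have hr1 : (1:ℝ) ≤ α₂/α₁ := (one_le_div hα₁).mpr hα
  have h1cT : (0:ℝ) < 1 - cT := by linarith
  have hσnn : ∀ t : ℝ, 0 ≤ t → 0 ≤ σc t := by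
    intro t ht
    rcases eq_or_lt_of_le ht with h | h
    · rw [← h, hσc_zero]
    · have := hσc_mono Set.self_mem_Ici (Set.mem_Ici.mpr ht) h
      rw [hσc_zero] at this; linarith
  have hσle : ∀ a b : ℝ, 0 ≤ a → a ≤ b → σc a ≤ σc b := by
    intro a b ha hab
    rcases eq_or_lt_of_le hab with h | h
    · rw [h]
    · exact (hσc_mono (Set.mem_Ici.mpr ha) (Set.mem_Ici.mpr (ha.trans hab)) h).le
  set sr := Real.sqrt (α₂/α₁) with hsrdef
  have hsr1 : (1:ℝ) ≤ sr := by
    rw [hsrdef, show (1:ℝ) = Real.sqrt 1 by simp]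
    exact Real.sqrt_le_sqrt hr1
  have hsr0 : (0:ℝ) < sr := lt_of_lt_of_le one_pos hsr1
  have hsr2 : sr^2 = α₂/α₁ := Real.sq_sqrt hr0.le
  clear_value sr
  have hτ0 : (0:ℝ) < τ := lt_of_le_of_lt (div_nonneg (Real.log_nonneg hr1) hμ.le) hτ
  have hlog : Real.log (α₂/α₁) < τ*μ := by
    rw [div_lt_iff₀ hμ] at hτ; linarith
  set ee := Real.exp (-(τ*μ)/2) with heedef
  have hee0 : (0:ℝ) < ee := Real.exp_pos _
  have hee2 : ee^2 = Real.exp (-(τ*μ)) := by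
    rw [heedef, sq, ← Real.exp_add]; congr 1; ring
  set cW := sr * ee with hcWdef
  have hcW0 : (0:ℝ) < cW := mul_pos hsr0 hee0
  have hcW2 : cW^2 = (α₂/α₁) * ee^2 := by rw [hcWdef, mul_pow, hsr2]
  have hcW1 : cW < 1 := by
    have h3 : cW^2 < 1 := by
      rw [hcW2, hee2, ← Real.exp_log hr0, ← Real.exp_add, ← Real.exp_zero]
      exact Real.exp_lt_exp.mpr (by linarith)
    nlinarith only [h3, sq_nonneg (cW - 1), hcW0]
  have heecW : ee ≤ cW := by
    rw [hcWdef]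
    nlinarith only [mul_nonneg (by linarith : (0:ℝ) ≤ sr - 1) hee0.le]
  clear_value ee cW
  have hlvm0 : 0 < eigMin hP.1 := StmtAux.eigMin_pos' hP hnu
  have hlvM0 : 0 < eigMax hP.1 := lt_of_lt_of_le hlvm0 (StmtAux.eigMin_le_eigMax' hP.1 hnu)
  set lvm := eigMin hP.1 with hlvmdef
  set lvM := eigMax hP.1 with hlvMdef
  set sm := Real.sqrt lvm with hsmdef
  set sM := Real.sqrt lvM with hsMdef
  have hsm0 : 0 < sm := Real.sqrt_pos.mpr hlvm0
  have hsM0 : 0 < sM := Real.sqrt_pos.mpr hlvM0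
  have hpnlow : ∀ a : EuclideanSpace ℝ (Fin nu), sm * ‖a‖ ≤ pnorm P a := fun a =>
    StmtAux.eigMin_le_pnorm hP hlvm0.le a
  have hpnub : ∀ a : EuclideanSpace ℝ (Fin nu), pnorm P a ≤ sM * ‖a‖ := fun a =>
    StmtAux.pnorm_le_eigMax hP hlvM0.le a
  set κ' := sM / sm with hκ'def
  have hκ'0 : 0 < κ' := div_pos hsM0 hsm0
  have hκ'κ : κ' ≤ lvM/lvm := by
    have hκ'2 : κ'^2 = lvM/lvm := by
      rw [hκ'def, div_pow, hsMdef, hsmdef, Real.sq_sqrt hlvM0.le, Real.sq_sqrt hlvm0.le]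
    have hκ1 : (1:ℝ) ≤ lvM/lvm := (one_le_div hlvm0).mpr (StmtAux.eigMin_le_eigMax' hP.1 hnu)
    have hκ'1 : (1:ℝ) ≤ κ' := by nlinarith only [hκ'2, hκ1, hκ'0]
    nlinarith only [hκ'2, hκ'1, hκ'0]
  clear_value lvm lvM sm sM κ'
  set Lg := max ℓg 0 with hLgdef
  set Lx := max ℓx 0 with hLxdef
  have hLg0 : 0 ≤ Lg := le_max_right _ _
  have hLx0 : 0 ≤ Lx := le_max_right _ _
  have hg' : ∀ x1 x2 ww, ‖g x1 ww - g x2 ww‖ ≤ Lg * ‖x1 - x2‖ := fun a b c =>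
    (hg a b c).trans (mul_le_mul_of_nonneg_right (le_max_left _ _) (norm_nonneg _))
  have hxss' : ∀ u1 ∈ U, ∀ u2 ∈ U, ∀ ww ∈ Wd, ‖xss u1 ww - xss u2 ww‖ ≤ Lx * ‖u1 - u2‖ :=
    fun a ha b hb c hc =>
    (hxss a ha b hb c hc).trans (mul_le_mul_of_nonneg_right (le_max_left _ _) (norm_nonneg _))
  clear_value Lg Lx
  set r' := (1+cT)/(1-cT) with hr'def
  have hr'0 : 0 < r' := by rw [hr'def]; exact div_pos (by linarith) h1cT
  have hr'c : r' * (1-cT) = 1+cT := by rw [hr'def]; exact div_mul_cancel₀ _ (ne_of_gt h1cT)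
  clear_value r'
  have hKEY : ε * (Lx * (ℓT * Lg) * ee * cW) * (1 + κ' * r') < 1 - cW := by
    by_cases hgx : 0 < ℓg ∧ 0 < ℓx
    · obtain ⟨hℓg, hℓx⟩ := hgx
      have hLgg : Lg = ℓg := by rw [hLgdef]; exact max_eq_left hℓg.le
      have hLxx : Lx = ℓx := by rw [hLxdef]; exact max_eq_left hℓx.le
      have hfrac : 0 < (lvM/lvm)*(1+cT)/(1-cT) := by
        apply div_pos _ h1cT
        have h0 : 0 < lvM/lvm := div_pos hlvM0 hlvm0
        nlinarith only [h0, hcT0]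
      have hden : 0 < ℓg * ℓx * ℓT * (1 + (lvM/lvm) * (1 + cT) / (1 - cT)) * (α₂/α₁) := by
        have h1 : 0 < 1 + (lvM/lvm)*(1+cT)/(1-cT) := by linarith
        positivity
      have hεd := (lt_div_iff₀ hden).mp hεbar
      have hNum : (Real.exp (τ*μ/2) * (Real.exp (τ*μ/2) - sr)) * ee^2 = 1 - cW := by
        rw [hcWdef, heedef, show -(τ*μ)/2 = -(τ*μ/2) by ring, Real.exp_neg]
        have := Real.exp_pos (τ*μ/2)
        field_simp
      have hmul := mul_lt_mul_of_pos_right hεd (by positivity : (0:ℝ) < ee^2)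
      rw [hNum] at hmul
      have hcomp : ε * (Lx * (ℓT * Lg) * ee * cW) * (1 + κ' * r')
          ≤ ε * (ℓg * ℓx * ℓT * (1 + (lvM/lvm) * (1 + cT) / (1 - cT)) * (α₂/α₁)) * ee^2 := by
        rw [hLgg, hLxx]
        have h1 : ee * cW ≤ cW^2 := by nlinarith only [heecW, hcW0]
        have h2 : 1 + κ' * r' ≤ 1 + (lvM/lvm) * (1+cT) / (1-cT) := by
          have : κ' * r' ≤ (lvM/lvm) * r' := mul_le_mul_of_nonneg_right hκ'κ hr'0.le
          rw [hr'def] at this ⊢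
          rw [mul_div_assoc]
          linarith
        have h3 : ε * (ℓx * (ℓT * ℓg) * ee * cW) * (1 + κ' * r')
            = (ε * (ℓx * (ℓT * ℓg))) * ((ee * cW) * (1 + κ' * r')) := by ring
        have h4 : ε * (ℓg * ℓx * ℓT * (1 + (lvM/lvm) * (1 + cT) / (1 - cT)) * (α₂/α₁)) * ee^2
            = (ε * (ℓx * (ℓT * ℓg))) * ((cW^2) * (1 + (lvM/lvm) * (1+cT) / (1-cT))) := by
          rw [hcW2]; ring
        rw [h3, h4]
        apply mul_le_mul_of_nonneg_left _ (by positivity)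
        have h5 : 0 < 1 + κ' * r' := by nlinarith only [mul_pos hκ'0 hr'0]
        calc (ee * cW) * (1 + κ' * r') ≤ cW^2 * (1 + κ' * r') :=
              mul_le_mul_of_nonneg_right h1 h5.le
          _ ≤ cW^2 * (1 + (lvM/lvm) * (1+cT) / (1-cT)) :=
              mul_le_mul_of_nonneg_left h2 (by positivity)
      exact lt_of_le_of_lt hcomp hmul
    · have hz0 : Lx * (ℓT * Lg) = 0 := by
        rcases not_and_or.mp hgx with h | h
        · have hh : Lg = 0 := by rw [hLgdef]; exact max_eq_right (not_lt.mp h)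
          rw [hh]; ring
        · have hh : Lx = 0 := by rw [hLxdef]; exact max_eq_right (not_lt.mp h)
          rw [hh]; ring
      rw [show ε * (Lx * (ℓT * Lg) * ee * cW) * (1 + κ' * r')
          = (Lx * (ℓT * Lg)) * (ε * ee * cW * (1 + κ' * r')) by ring, hz0]
      linarith
  -- matrix gains
  set D := 1 - ε*(1-cT) with hDdef
  have hD0 : 0 < D := by
    rw [hDdef]
    nlinarith only [mul_nonneg (by linarith : (0:ℝ) ≤ 1 - ε) h1cT.le, hε0, hcT0, h1cT]
  have hD1 : D < 1 := by
    rw [hDdef]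
    nlinarith only [mul_pos hε0 h1cT]
  have hDeq : 1 - D = ε*(1-cT) := by rw [hDdef]; ring
  set A := cW + ε*(Lx*(ℓT*Lg))*ee*cW with hAdef
  have hQ0 : 0 ≤ ε*(Lx*(ℓT*Lg))*ee*cW :=
    mul_nonneg (mul_nonneg (mul_nonneg hε0.le
      (mul_nonneg hLx0 (mul_nonneg hℓT.le hLg0))) hee0.le) hcW0.le
  have hA0 : 0 < A := by rw [hAdef]; linarith
  have hA1 : A < 1 := by
    have h1 : ε * (Lx * (ℓT * Lg) * ee * cW) * (κ' * r') ≥ 0 := by positivity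
    rw [hAdef]; nlinarith only [hKEY, h1]
  have hsa1 : 0 < Real.sqrt α₁ := Real.sqrt_pos.mpr hα₁
  have hsa2 : 0 < Real.sqrt α₂ := Real.sqrt_pos.mpr hα₂
  have hsrr : Real.sqrt α₂ = sr * Real.sqrt α₁ := by
    rw [hsrdef, ← Real.sqrt_mul hr0.le, div_mul_cancel₀ _ (ne_of_gt hα₁)]
  set B := ε*ee*Real.sqrt α₂*Lx*(1+cT)/sm with hBdef
  have hB0 : 0 ≤ B := by
    rw [hBdef]
    apply div_nonneg _ hsm0.le
    exact mul_nonneg (mul_nonneg (mul_nonneg (mul_nonneg hε0.le hee0.le) hsa2.le) hLx0)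
      (by linarith)
  set C := ε*sM*(ℓT*Lg)*ee/Real.sqrt α₁ with hCdef
  have hC0 : 0 ≤ C := by
    rw [hCdef]
    apply div_nonneg _ hsa1.le
    exact mul_nonneg (mul_nonneg (mul_nonneg hε0.le hsM0.le)
      (mul_nonneg hℓT.le hLg0)) hee0.le
  clear_value D A B C
  have hBC : B*C < (1-A)*(1-D) := by
    have hBCeq : B*C = ((ε * (Lx * (ℓT * Lg) * ee * cW)) * (κ' * r')) * (ε*(1-cT)) := by
      rw [hBdef, hCdef, hcWdef, hκ'def, hsrr, ← hr'c]
      field_simp [hsm0.ne', hsa1.ne', h1cT.ne']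
    have h5 : (ε * (Lx * (ℓT * Lg) * ee * cW)) * (κ' * r') < 1 - A := by
      rw [hAdef]; nlinarith only [hKEY]
    rw [hBCeq, hDeq]
    apply mul_lt_mul_of_pos_right h5 (by positivity)
  set q0 := ((1-A)*(1-D) - B*C)/(2*(B+1)) with hq0def
  have hq00 : 0 < q0 := div_pos (by nlinarith only [hBC]) (by nlinarith only [hB0])
  have h1D0 : 0 < 1 - D := by rw [hDeq]; positivity
  set θ := (C + q0)/(1-D) with hθdef
  have hθ0 : 0 < θ := by rw [hθdef]; exact div_pos (by linarith) h1D0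
  have hθeq : θ * (1-D) = C + q0 := by
    rw [hθdef]; exact div_mul_cancel₀ _ h1D0.ne'
  clear_value q0 θ
  set cM := max (A + B*θ) (D + C/θ) with hcMdef
  have hABθ : A + B*θ < 1 := by
    have e1 : B*θ*(1-D) = B*C + B*q0 := by
      calc B*θ*(1-D) = B*(θ*(1-D)) := by ring
        _ = B*(C + q0) := by rw [hθeq]
        _ = B*C + B*q0 := by ring
    have e2 : B*q0 ≤ (B+1)*q0 := by nlinarith only [hq00]
    have e3 : (B+1)*q0 = ((1-A)*(1-D) - B*C)/2 := by
      have hBne : (B+1) ≠ 0 := by linarith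
      rw [hq0def]; field_simp [hBne]
    have e4 : B*θ*(1-D) < (1-A)*(1-D) := by
      rw [e1]; rw [e3] at e2; linarith only [e2, hBC]
    have e5 : B*θ < 1-A := lt_of_mul_lt_mul_right e4 h1D0.le
    linarith
  have hDCθ : D + C/θ < 1 := by
    have h1 : C/θ < 1 - D := by
      rw [div_lt_iff₀ hθ0]
      nlinarith only [hθeq, hq00]
    linarith
  have hcM1 : cM < 1 := max_lt hABθ hDCθ
  have hcM0 : 0 < cM := by
    have : 0 < D + C/θ := by positivity
    exact lt_of_lt_of_le this (le_max_right _ _)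
  have hAcM : A + B*θ ≤ cM := le_max_left _ _
  have hDcM : D + C/θ ≤ cM := le_max_right _ _
  clear_value cM
  -- sequences
  set Pk : ℕ → ℝ := fun k => Real.sqrt (V (x k) (u k) (w k)) with hPkdef
  set bk : ℕ → ℝ := fun k => pnorm P (u k - ustar (w k)) with hbkdef
  set Nk : ℕ → ℝ := fun k => max (Pk k) (bk k / θ) with hNkdef
  have hPk0 : ∀ k, 0 ≤ Pk k := fun k => Real.sqrt_nonneg _
  have hbk0 : ∀ k, 0 ≤ bk k := fun k => StmtAux.pnorm_nonneg _
  have hNk0 : ∀ k, 0 ≤ Nk k := fun k => le_trans (hPk0 k) (le_max_left _ _)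
  set Zs : ℕ → ℝ := fun k => ℓus * (τ * z k) with hZsdef
  set Zq : ℕ → ℝ := fun k => Real.sqrt (τ * σc (z k)) with hZqdef
  have hZs0 : ∀ k, 0 ≤ Zs k := fun k => mul_nonneg hℓus.le (mul_nonneg hτ0.le (hz k))
  have hZq0 : ∀ k, 0 ≤ Zq k := fun k => Real.sqrt_nonneg _
  set βa := 1 + ε*(Lx*(ℓT*Lg))*ee*sr with hβadef
  set βb := ε*ee*Real.sqrt α₂*Lx*(cT*κ'+1) with hβbdef
  set βc := D*sM with hβcdef
  set βd := ε*sM*(ℓT*Lg)/Real.sqrt α₁ with hβddef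
  have hβa0 : 0 ≤ βa := by
    rw [hβadef]
    have h1 : 0 ≤ ε*(Lx*(ℓT*Lg))*ee*sr :=
      mul_nonneg (mul_nonneg (mul_nonneg hε0.le
        (mul_nonneg hLx0 (mul_nonneg hℓT.le hLg0))) hee0.le) hsr0.le
    linarith
  have hβb0 : 0 ≤ βb := by
    rw [hβbdef]
    have h1 : 0 ≤ cT*κ'+1 := by nlinarith only [mul_pos hcT0 hκ'0]
    exact mul_nonneg (mul_nonneg (mul_nonneg (mul_nonneg hε0.le hee0.le) hsa2.le) hLx0) h1
  have hβc0 : 0 ≤ βc := by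
    rw [hβcdef]; exact mul_nonneg hD0.le hsM0.le
  have hβd0 : 0 ≤ βd := by
    rw [hβddef]
    exact div_nonneg (mul_nonneg (mul_nonneg hε0.le hsM0.le) (mul_nonneg hℓT.le hLg0)) hsa1.le
  clear_value βa βb βc βd
  -- step facts
  have hF1 : ∀ k, ∀ v ∈ U, Real.sqrt (V (x (k+1)) v (w (k+1)))
      ≤ ee * Real.sqrt (V (x k) v (w k)) + Zq k := by
    intro k v hv
    have h1 := hVdec k v hv
    have hσ0 : 0 ≤ τ * σc (z k) := mul_nonneg hτ0.le (hσnn _ (hz k))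
    have hVv : 0 ≤ V (x k) v (w k) :=
      le_trans (by positivity) ((hV (x k) v hv (w k) (hwW k)).1)
    have hexp : Real.exp (-(μ*τ)) = ee^2 := by rw [hee2]; congr 1; ring
    calc Real.sqrt (V (x (k+1)) v (w (k+1)))
        ≤ Real.sqrt (ee^2 * V (x k) v (w k) + τ * σc (z k)) := by
          apply Real.sqrt_le_sqrt; rw [← hexp]; exact h1
      _ ≤ Real.sqrt (ee^2 * V (x k) v (w k)) + Real.sqrt (τ * σc (z k)) :=
          StmtAux.sqrt_add_le' (by positivity) hσ0
      _ = ee * Real.sqrt (V (x k) v (w k)) + Zq k := by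
          rw [Real.sqrt_mul (sq_nonneg ee), Real.sqrt_sq hee0.le]
  have hVup : ∀ k, ∀ v ∈ U, Real.sqrt (V (x k) v (w k))
      ≤ Real.sqrt α₂ * ‖x k - xss v (w k)‖ := by
    intro k v hv
    calc Real.sqrt (V (x k) v (w k))
        ≤ Real.sqrt (α₂ * ‖x k - xss v (w k)‖^2) :=
          Real.sqrt_le_sqrt (hV _ v hv _ (hwW k)).2
      _ = Real.sqrt α₂ * ‖x k - xss v (w k)‖ := by
          rw [Real.sqrt_mul hα₂.le, Real.sqrt_sq (norm_nonneg _)]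
  have hVlow : ∀ k, ∀ v ∈ U, ‖x k - xss v (w k)‖ ≤ Real.sqrt (V (x k) v (w k)) / Real.sqrt α₁ := by
    intro k v hv
    rw [le_div_iff₀ hsa1]
    calc ‖x k - xss v (w k)‖ * Real.sqrt α₁ = Real.sqrt (α₁ * ‖x k - xss v (w k)‖^2) := by
          rw [Real.sqrt_mul hα₁.le, Real.sqrt_sq (norm_nonneg _)]; ring
      _ ≤ Real.sqrt (V (x k) v (w k)) := Real.sqrt_le_sqrt (hV _ v hv _ (hwW k)).1
  have hF2 : ∀ k, ‖x (k+1) - xss (u k) (w (k+1))‖ ≤ (ee * Pk k + Zq k)/Real.sqrt α₁ := by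
    intro k
    have h1 := hVlow (k+1) (u k) (huU k)
    have h2 := hF1 k (u k) (huU k)
    have h3 : Real.sqrt (V (x k) (u k) (w k)) = Pk k := rfl
    rw [h3] at h2
    calc ‖x (k+1) - xss (u k) (w (k+1))‖
        ≤ Real.sqrt (V (x (k+1)) (u k) (w (k+1))) / Real.sqrt α₁ := h1
      _ ≤ (ee * Pk k + Zq k)/Real.sqrt α₁ := by apply div_le_div_of_nonneg_right h2 hsa1.le
  have hust : ∀ k, ‖ustar (w (k+1)) - ustar (w k)‖ ≤ ℓus * (τ * z k) := by
    intro k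
    calc ‖ustar (w (k+1)) - ustar (w k)‖ ≤ ℓus * ‖w (k+1) - w k‖ :=
          hustarLip (w k) (hwW k) (w (k+1)) (hwW (k+1))
      _ ≤ ℓus * (τ * z k) := mul_le_mul_of_nonneg_left (hwz k) hℓus.le
  have hdum : ∀ k, ‖u k - ustar (w k)‖ ≤ bk k / sm := by
    intro k
    rw [le_div_iff₀ hsm0, mul_comm]
    exact hpnlow _
  have hF5a : ∀ k, pnorm P (u k - ustar (w (k+1))) ≤ bk k + sM * Zs k := by
    intro k
    have hsplit : u k - ustar (w (k+1))
        = (u k - ustar (w k)) + (ustar (w k) - ustar (w (k+1))) := by abel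
    rw [hsplit]
    calc pnorm P ((u k - ustar (w k)) + (ustar (w k) - ustar (w (k+1))))
        ≤ pnorm P (u k - ustar (w k)) + pnorm P (ustar (w k) - ustar (w (k+1))) :=
          StmtAux.pnorm_triangle hP _ _
      _ ≤ bk k + sM * Zs k := by
          apply add_le_add le_rfl
          calc pnorm P (ustar (w k) - ustar (w (k+1)))
              ≤ sM * ‖ustar (w k) - ustar (w (k+1))‖ := hpnub _
            _ = sM * ‖ustar (w (k+1)) - ustar (w k)‖ := by rw [norm_sub_rev]
            _ ≤ sM * Zs k := mul_le_mul_of_nonneg_left (hust k) hsM0.le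
  have hF5b : ∀ k, pnorm P (T (u k) (g (xss (u k) (w (k+1))) (w (k+1))) - ustar (w (k+1)))
      ≤ cT * (bk k + sM * Zs k) := by
    intro k
    calc pnorm P (T (u k) (g (xss (u k) (w (k+1))) (w (k+1))) - ustar (w (k+1)))
        ≤ cT * pnorm P (u k - ustar (w (k+1))) := hcontr (w (k+1)) (hwW (k+1)) (u k) (huU k)
      _ ≤ cT * (bk k + sM * Zs k) := mul_le_mul_of_nonneg_left (hF5a k) hcT0.le
  have hF4 : ∀ k, ‖T (u k) (g (x (k+1)) (w (k+1))) - T (u k) (g (xss (u k) (w (k+1))) (w (k+1)))‖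
      ≤ (ℓT*Lg) * ((ee * Pk k + Zq k)/Real.sqrt α₁) := by
    intro k
    calc ‖T (u k) (g (x (k+1)) (w (k+1))) - T (u k) (g (xss (u k) (w (k+1))) (w (k+1)))‖
        ≤ ℓT * ‖g (x (k+1)) (w (k+1)) - g (xss (u k) (w (k+1))) (w (k+1))‖ := hT _ _ _
      _ ≤ ℓT * (Lg * ‖x (k+1) - xss (u k) (w (k+1))‖) :=
          mul_le_mul_of_nonneg_left (hg' _ _ _) hℓT.le
      _ ≤ ℓT * (Lg * ((ee * Pk k + Zq k)/Real.sqrt α₁)) :=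
          mul_le_mul_of_nonneg_left (mul_le_mul_of_nonneg_left (hF2 k) hLg0) hℓT.le
      _ = (ℓT*Lg) * ((ee * Pk k + Zq k)/Real.sqrt α₁) := by ring
  have hTh : ∀ k, ‖T (u k) (g (xss (u k) (w (k+1))) (w (k+1))) - ustar (w (k+1))‖
      ≤ cT * (bk k + sM * Zs k) / sm := by
    intro k
    rw [le_div_iff₀ hsm0, mul_comm]
    calc sm * ‖T (u k) (g (xss (u k) (w (k+1))) (w (k+1))) - ustar (w (k+1))‖
        ≤ pnorm P (T (u k) (g (xss (u k) (w (k+1))) (w (k+1))) - ustar (w (k+1))) :=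
          hpnlow _
      _ ≤ cT * (bk k + sM * Zs k) := hF5b k
  have hTu : ∀ k, ‖T (u k) (g (x (k+1)) (w (k+1))) - u k‖
      ≤ (ℓT*Lg) * ((ee * Pk k + Zq k)/Real.sqrt α₁)
        + cT * (bk k + sM * Zs k) / sm + (bk k / sm + Zs k) := by
    intro k
    have t1 := StmtAux.norm_sub_le₃ (T (u k) (g (x (k+1)) (w (k+1))))
      (T (u k) (g (xss (u k) (w (k+1))) (w (k+1)))) (u k)
    have t2 := StmtAux.norm_sub_le₃ (T (u k) (g (xss (u k) (w (k+1))) (w (k+1))))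
      (ustar (w (k+1))) (u k)
    have t3 : ‖ustar (w (k+1)) - u k‖ ≤ Zs k + bk k / sm := by
      have t4 := StmtAux.norm_sub_le₃ (ustar (w (k+1))) (ustar (w k)) (u k)
      have t5 : ‖ustar (w k) - u k‖ = ‖u k - ustar (w k)‖ := norm_sub_rev _ _
      have t6 := hdum k
      have t7 := hust k
      have t8 : ‖ustar (w (k+1)) - ustar (w k)‖ ≤ Zs k := t7
      linarith
    have t9 := hF4 k
    have t10 := hTh k
    linarith
  -- R2
  have hR2 : ∀ k, bk (k+1) ≤ C * Pk k + D * bk k + (βc * Zs k + βd * Zq k) := by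
    intro k
    have hsplit : u (k+1) - ustar (w (k+1))
        = (1-ε) • (u k - ustar (w (k+1)))
          + ε • (T (u k) (g (x (k+1)) (w (k+1))) - ustar (w (k+1))) := by
      rw [hupd k]; module
    have h1 : bk (k+1) ≤ (1-ε) * pnorm P (u k - ustar (w (k+1)))
        + ε * pnorm P (T (u k) (g (x (k+1)) (w (k+1))) - ustar (w (k+1))) := by
      have : bk (k+1) = pnorm P (u (k+1) - ustar (w (k+1))) := rfl
      rw [this, hsplit]
      calc pnorm P ((1-ε) • (u k - ustar (w (k+1)))
            + ε • (T (u k) (g (x (k+1)) (w (k+1))) - ustar (w (k+1))))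
          ≤ pnorm P ((1-ε) • (u k - ustar (w (k+1))))
            + pnorm P (ε • (T (u k) (g (x (k+1)) (w (k+1))) - ustar (w (k+1)))) :=
            StmtAux.pnorm_triangle hP _ _
        _ = (1-ε) * pnorm P (u k - ustar (w (k+1)))
            + ε * pnorm P (T (u k) (g (x (k+1)) (w (k+1))) - ustar (w (k+1))) := by
            rw [StmtAux.pnorm_smul hP, StmtAux.pnorm_smul hP,
              abs_of_nonneg (by linarith : (0:ℝ) ≤ 1-ε), abs_of_pos hε0]
    have h2 : pnorm P (T (u k) (g (x (k+1)) (w (k+1))) - ustar (w (k+1)))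
        ≤ sM * ((ℓT*Lg) * ((ee * Pk k + Zq k)/Real.sqrt α₁)) + cT * (bk k + sM * Zs k) := by
      have hsp2 : T (u k) (g (x (k+1)) (w (k+1))) - ustar (w (k+1))
          = (T (u k) (g (x (k+1)) (w (k+1))) - T (u k) (g (xss (u k) (w (k+1))) (w (k+1))))
            + (T (u k) (g (xss (u k) (w (k+1))) (w (k+1))) - ustar (w (k+1))) := by abel
      rw [hsp2]
      calc pnorm P _ ≤ pnorm P (T (u k) (g (x (k+1)) (w (k+1)))
              - T (u k) (g (xss (u k) (w (k+1))) (w (k+1))))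
            + pnorm P (T (u k) (g (xss (u k) (w (k+1))) (w (k+1))) - ustar (w (k+1))) :=
            StmtAux.pnorm_triangle hP _ _
        _ ≤ sM * ((ℓT*Lg) * ((ee * Pk k + Zq k)/Real.sqrt α₁)) + cT * (bk k + sM * Zs k) := by
            apply add_le_add
            · exact le_trans (hpnub _) (mul_le_mul_of_nonneg_left (hF4 k) hsM0.le)
            · exact hF5b k
    have h3 := hF5a k
    calc bk (k+1) ≤ (1-ε) * pnorm P (u k - ustar (w (k+1)))
          + ε * pnorm P (T (u k) (g (x (k+1)) (w (k+1))) - ustar (w (k+1))) := h1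
      _ ≤ (1-ε) * (bk k + sM * Zs k)
          + ε * (sM * ((ℓT*Lg) * ((ee * Pk k + Zq k)/Real.sqrt α₁)) + cT * (bk k + sM * Zs k)) := by
          apply add_le_add
          · exact mul_le_mul_of_nonneg_left h3 (by linarith)
          · exact mul_le_mul_of_nonneg_left h2 hε0.le
      _ = C * Pk k + D * bk k + (βc * Zs k + βd * Zq k) := by
          rw [hCdef, hβcdef, hβddef, hDdef]
          field_simp [hsa1.ne', hsm0.ne']
          ring
  -- R1
  have hR1 : ∀ k, Pk (k+1) ≤ A * Pk k + B * bk k + (βa * Zq k + βb * Zs k) := by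
    intro k
    have h1 : Pk (k+1) ≤ ee * Real.sqrt (V (x k) (u (k+1)) (w k)) + Zq k :=
      hF1 k (u (k+1)) (huU (k+1))
    have h2 : Real.sqrt (V (x k) (u (k+1)) (w k))
        ≤ Real.sqrt α₂ * (Pk k / Real.sqrt α₁ + Lx * ‖u (k+1) - u k‖) := by
      calc Real.sqrt (V (x k) (u (k+1)) (w k))
          ≤ Real.sqrt α₂ * ‖x k - xss (u (k+1)) (w k)‖ := hVup k (u (k+1)) (huU (k+1))
        _ ≤ Real.sqrt α₂ * (‖x k - xss (u k) (w k)‖ + ‖xss (u k) (w k) - xss (u (k+1)) (w k)‖) :=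
            mul_le_mul_of_nonneg_left (StmtAux.norm_sub_le₃ _ _ _) hsa2.le
        _ ≤ Real.sqrt α₂ * (Pk k / Real.sqrt α₁ + Lx * ‖u (k+1) - u k‖) := by
            apply mul_le_mul_of_nonneg_left _ hsa2.le
            apply add_le_add
            · have h3 : Real.sqrt (V (x k) (u k) (w k)) = Pk k := rfl
              have := hVlow k (u k) (huU k)
              rw [h3] at this; exact this
            · calc ‖xss (u k) (w k) - xss (u (k+1)) (w k)‖
                  ≤ Lx * ‖u k - u (k+1)‖ := hxss' (u k) (huU k) (u (k+1)) (huU (k+1)) (w k) (hwW k)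
                _ = Lx * ‖u (k+1) - u k‖ := by rw [norm_sub_rev]
    have hdu : ‖u (k+1) - u k‖ = ε * ‖T (u k) (g (x (k+1)) (w (k+1))) - u k‖ := by
      have hh : u (k+1) - u k = ε • (T (u k) (g (x (k+1)) (w (k+1))) - u k) := by
        rw [hupd k]; module
      rw [hh, norm_smul, Real.norm_eq_abs, abs_of_pos hε0]
    have h4 := hTu k
    calc Pk (k+1) ≤ ee * Real.sqrt (V (x k) (u (k+1)) (w k)) + Zq k := h1
      _ ≤ ee * (Real.sqrt α₂ * (Pk k / Real.sqrt α₁ + Lx * ‖u (k+1) - u k‖)) + Zq k := by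
          apply add_le_add_left (mul_le_mul_of_nonneg_left h2 hee0.le)
      _ = ee * (Real.sqrt α₂ * (Pk k / Real.sqrt α₁
            + Lx * (ε * ‖T (u k) (g (x (k+1)) (w (k+1))) - u k‖))) + Zq k := by rw [hdu]
      _ ≤ ee * (Real.sqrt α₂ * (Pk k / Real.sqrt α₁
            + Lx * (ε * ((ℓT*Lg) * ((ee * Pk k + Zq k)/Real.sqrt α₁)
              + cT * (bk k + sM * Zs k) / sm + (bk k / sm + Zs k))))) + Zq k := by
          apply add_le_add_left
          apply mul_le_mul_of_nonneg_left _ hee0.le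
          apply mul_le_mul_of_nonneg_left _ hsa2.le
          apply add_le_add_right
          exact mul_le_mul_of_nonneg_left (mul_le_mul_of_nonneg_left h4 hε0.le) hLx0
      _ = A * Pk k + B * bk k + (βa * Zq k + βb * Zs k) := by
          rw [hAdef, hBdef, hβadef, hβbdef, hcWdef, hκ'def, hsrr]
          field_simp [hsa1.ne', hsm0.ne']
          ring
  -- combined contraction
  set G : ℕ → ℝ := fun k => (βb + βc/θ) * Zs k + (βa + βd/θ) * Zq k with hGdef
  have hG0 : ∀ k, 0 ≤ G k := by
    intro k
    have h1 : 0 ≤ βb + βc/θ := by positivity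
    have h2 : 0 ≤ βa + βd/θ := by positivity
    have := hZs0 k; have := hZq0 k
    positivity
  have hstep : ∀ k, Nk (k+1) ≤ cM * Nk k + G k := by
    intro k
    have hPN : Pk k ≤ Nk k := le_max_left _ _
    have hbN : bk k ≤ θ * Nk k := by
      have h1 : bk k / θ ≤ Nk k := le_max_right _ _
      calc bk k = θ * (bk k / θ) := by field_simp [hθ0.ne']
        _ ≤ θ * Nk k := mul_le_mul_of_nonneg_left h1 hθ0.le
    have hG1 : βa * Zq k + βb * Zs k ≤ G k := by
      have h1 : 0 ≤ βc/θ * Zs k := mul_nonneg (div_nonneg hβc0 hθ0.le) (hZs0 k)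
      have h2 : 0 ≤ βd/θ * Zq k := mul_nonneg (div_nonneg hβd0 hθ0.le) (hZq0 k)
      have hGk : G k = (βb + βc/θ) * Zs k + (βa + βd/θ) * Zq k := rfl
      rw [hGk]
      nlinarith only [h1, h2]
    have h1 : Pk (k+1) ≤ cM * Nk k + G k := by
      calc Pk (k+1) ≤ A * Pk k + B * bk k + (βa * Zq k + βb * Zs k) := hR1 k
        _ ≤ A * Nk k + B * (θ * Nk k) + (βa * Zq k + βb * Zs k) := by
            apply add_le_add_left
            apply add_le_add (mul_le_mul_of_nonneg_left hPN hA0.le)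
              (mul_le_mul_of_nonneg_left hbN hB0)
        _ = (A + B*θ) * Nk k + (βa * Zq k + βb * Zs k) := by ring
        _ ≤ cM * Nk k + G k :=
            add_le_add (mul_le_mul_of_nonneg_right hAcM (hNk0 k)) hG1
    have h2 : bk (k+1) / θ ≤ cM * Nk k + G k := by
      have hb1 : bk (k+1) ≤ (C + D*θ) * Nk k + (βc * Zs k + βd * Zq k) := by
        calc bk (k+1) ≤ C * Pk k + D * bk k + (βc * Zs k + βd * Zq k) := hR2 k
          _ ≤ C * Nk k + D * (θ * Nk k) + (βc * Zs k + βd * Zq k) := by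
              apply add_le_add_left
              exact add_le_add (mul_le_mul_of_nonneg_left hPN hC0)
                (mul_le_mul_of_nonneg_left hbN hD0.le)
          _ = (C + D*θ) * Nk k + (βc * Zs k + βd * Zq k) := by ring
      calc bk (k+1) / θ ≤ ((C + D*θ) * Nk k + (βc * Zs k + βd * Zq k)) / θ := by
            apply div_le_div_of_nonneg_right hb1 hθ0.le
        _ = (C/θ + D) * Nk k + (βc/θ * Zs k + βd/θ * Zq k) := by
            field_simp [hθ0.ne']
            try ring
        _ ≤ cM * Nk k + G k := by
            apply add_le_add
            · apply mul_le_mul_of_nonneg_right _ (hNk0 k)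
              calc C/θ + D = D + C/θ := by ring
                _ ≤ cM := hDcM
            · have hGk : G k = (βb + βc/θ) * Zs k + (βa + βd/θ) * Zq k := rfl
              rw [hGk]
              have h3 : 0 ≤ βb * Zs k := mul_nonneg hβb0 (hZs0 k)
              have h4 : 0 ≤ βa * Zq k := mul_nonneg hβa0 (hZq0 k)
              nlinarith only [h3, h4]
    exact max_le h1 h2
  -- final constants
  set C₁ := 1/Real.sqrt α₁ + θ/sm with hC₁def
  have hC₁0 : 0 < C₁ := by
    rw [hC₁def]; exact add_pos (div_pos one_pos hsa1) (div_pos hθ0 hsm0)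
  set C₂ := max (Real.sqrt α₂) (sM/θ) with hC₂def
  have hC₂a : Real.sqrt α₂ ≤ C₂ := le_max_left _ _
  have hC₂b : sM/θ ≤ C₂ := le_max_right _ _
  have hC₂0 : 0 < C₂ := lt_of_lt_of_le hsa2 hC₂a
  set KK := max (βb + βc/θ) ((βa + βd/θ)*cW) with hKKdef
  have hKKa : βb + βc/θ ≤ KK := le_max_left _ _
  have hKKb : (βa + βd/θ)*cW ≤ KK := le_max_right _ _
  have hKK0 : 0 < KK := by
    have h1 : 0 < (βa + βd/θ)*cW := by
      have h3 : 0 < βa + βd/θ := by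
        have h4 : 0 ≤ βd/θ := div_nonneg hβd0 hθ0.le
        have h5 : (1:ℝ) ≤ βa := by
          rw [hβadef]
          have h6 : 0 ≤ ε*(Lx*(ℓT*Lg))*ee*sr :=
            mul_nonneg (mul_nonneg (mul_nonneg hε0.le
              (mul_nonneg hLx0 (mul_nonneg hℓT.le hLg0))) hee0.le) hsr0.le
          linarith
        linarith
      exact mul_pos h3 hcW0
    exact lt_of_lt_of_le h1 (le_max_right _ _)
  clear_value C₁ C₂ KK
  refine ⟨C₁*C₂, 2*C₁*KK/cM, cM, mul_pos hC₁0 hC₂0, by positivity, hcM0.le, hcM1, ?_, ?_⟩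
  · -- IsKFunction
    constructor
    · apply ContinuousOn.mul continuousOn_const
      apply Real.continuous_sqrt.comp_continuousOn
      apply ContinuousOn.add
      · exact ((continuous_const.mul continuous_id).pow 2).continuousOn
      · apply ContinuousOn.pow
        exact continuousOn_const.mul (Real.continuous_sqrt.comp_continuousOn hσc_cont)
    constructor
    · intro a ha b hb hab
      have ha0 : (0:ℝ) ≤ a := ha
      have hb0 : (0:ℝ) ≤ b := hb
      have hco : 0 < 2*C₁*KK/cM * (cM/(1-cM)) :=
        mul_pos (div_pos (mul_pos (mul_pos two_pos hC₁0) hKK0) hcM0)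
          (div_pos hcM0 (by linarith))
      apply mul_lt_mul_of_pos_left _ hco
      apply Real.sqrt_lt_sqrt
      · have : 0 ≤ σc a := hσnn a ha0
        positivity
      · apply add_lt_add_of_lt_of_le
        · have h1 : ℓus * τ * a < ℓus * τ * b := by
            apply mul_lt_mul_of_pos_left hab (by positivity)
          have h2 : 0 ≤ ℓus * τ * a := by positivity
          exact pow_lt_pow_left₀ h1 h2 two_ne_zero
        · have h1 : σc a ≤ σc b := hσle a b ha0 hab.le
          have h2 : Real.sqrt (σc a) ≤ Real.sqrt (σc b) := Real.sqrt_le_sqrt h1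
          have h4 : 0 ≤ Real.sqrt τ / cW := by positivity
          have h5 : Real.sqrt τ / cW * Real.sqrt (σc a) ≤ Real.sqrt τ / cW * Real.sqrt (σc b) :=
            mul_le_mul_of_nonneg_left h2 h4
          have h3 : 0 ≤ Real.sqrt τ / cW * Real.sqrt (σc a) := by positivity
          exact pow_le_pow_left₀ h3 h5 2
    · simp [hσc_zero]
  · -- main estimate
    intro K
    set SK := sSup (z '' Set.Iio K) with hSKdef
    have hSK0 : 0 ≤ SK := by
      rcases Nat.eq_zero_or_pos K with h | h
      · rw [hSKdef, h, show Set.Iio 0 = (∅ : Set ℕ) from by ext n; simp,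
          Set.image_empty, Real.sSup_empty]
      · have hmem : z 0 ∈ z '' Set.Iio K := ⟨0, h, rfl⟩
        exact le_trans (hz 0) (le_csSup (((Set.finite_Iio K).image z).bddAbove) hmem)
    have hzSK : ∀ j, j < K → z j ≤ SK := fun j hj =>
      le_csSup (((Set.finite_Iio K).image z).bddAbove) ⟨j, hj, rfl⟩
    clear_value SK
    set SX := ℓus * τ * SK with hSXdef
    set SY := Real.sqrt τ / cW * Real.sqrt (σc SK) with hSYdef
    have hSX0 : 0 ≤ SX := by
      rw [hSXdef]; exact mul_nonneg (mul_nonneg hℓus.le hτ0.le) hSK0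
    have hSY0 : 0 ≤ SY := by
      rw [hSYdef]
      exact mul_nonneg (div_nonneg (Real.sqrt_nonneg _) hcW0.le) (Real.sqrt_nonneg _)
    clear_value SX SY
    have hGle : ∀ j, j < K → G j ≤ KK*SX + KK*SY := by
      intro j hj
      have hZsle : Zs j ≤ SX := by
        rw [hSXdef]
        calc Zs j = ℓus * τ * z j := by rw [hZsdef]; ring
          _ ≤ ℓus * τ * SK := mul_le_mul_of_nonneg_left (hzSK j hj) (by positivity)
      have hZqle : Zq j ≤ cW * SY := by
        have h1 : σc (z j) ≤ σc SK := hσle _ _ (hz j) (hzSK j hj)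
        have h2 : cW * SY = Real.sqrt τ * Real.sqrt (σc SK) := by
          rw [hSYdef]; field_simp [hcW0.ne']
        calc Zq j = Real.sqrt (τ * σc (z j)) := rfl
          _ ≤ Real.sqrt (τ * σc SK) :=
              Real.sqrt_le_sqrt (mul_le_mul_of_nonneg_left h1 hτ0.le)
          _ = Real.sqrt τ * Real.sqrt (σc SK) := Real.sqrt_mul hτ0.le _
          _ = cW * SY := h2.symm
      have h1 : (βb + βc/θ) ≤ KK := hKKa
      have h2 : (βa + βd/θ)*cW ≤ KK := hKKb
      have h3 : 0 ≤ βb + βc/θ := by positivity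
      have h4 : 0 ≤ βa + βd/θ := by positivity
      calc G j = (βb + βc/θ) * Zs j + (βa + βd/θ) * Zq j := rfl
        _ ≤ (βb + βc/θ) * SX + (βa + βd/θ) * (cW * SY) := by
            apply add_le_add (mul_le_mul_of_nonneg_left hZsle h3)
              (mul_le_mul_of_nonneg_left hZqle h4)
        _ = (βb + βc/θ) * SX + ((βa + βd/θ) * cW) * SY := by ring
        _ ≤ KK*SX + KK*SY := add_le_add (mul_le_mul_of_nonneg_right h1 hSX0)
            (mul_le_mul_of_nonneg_right h2 hSY0)
    have hGB0 : 0 ≤ KK*SX + KK*SY :=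
      add_nonneg (mul_nonneg hKK0.le hSX0) (mul_nonneg hKK0.le hSY0)
    have hind : ∀ k, k ≤ K → Nk k ≤ cM^k * Nk 0 + (∑ i ∈ Finset.range k, cM^i) * (KK*SX+KK*SY) := by
      intro k
      induction k with
      | zero => intro _; simp
      | succ n ih =>
          intro hnK
          have h2 := ih (Nat.le_of_succ_le hnK)
          have h3 := hGle n (Nat.lt_of_succ_le hnK)
          calc Nk (n+1) ≤ cM * Nk n + G n := hstep n
            _ ≤ cM * (cM^n * Nk 0 + (∑ i ∈ Finset.range n, cM^i) * (KK*SX+KK*SY))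
                + (KK*SX+KK*SY) :=
                add_le_add (mul_le_mul_of_nonneg_left h2 hcM0.le) h3
            _ = cM^(n+1) * Nk 0 + (cM * (∑ i ∈ Finset.range n, cM^i) + 1) * (KK*SX+KK*SY) := by
                ring
            _ = cM^(n+1) * Nk 0 + (∑ i ∈ Finset.range (n+1), cM^i) * (KK*SX+KK*SY) := by
                rw [geom_sum_succ]
    have hgeo : (∑ i ∈ Finset.range K, cM^i) ≤ 1/(1-cM) := by
      rw [geom_sum_eq (ne_of_lt hcM1)]
      have hne1 : cM - 1 ≠ 0 := by
        intro h; exact absurd (by linarith : cM = 1) (ne_of_lt hcM1)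
      have hne2 : (1:ℝ) - cM ≠ 0 := by
        intro h; exact absurd (by linarith : cM = 1) (ne_of_lt hcM1)
      have he : (cM^K - 1)/(cM - 1) = (1 - cM^K)/(1-cM) := by
        rw [div_eq_div_iff hne1 hne2]; ring
      rw [he]
      have h1 : (1:ℝ) - cM^K ≤ 1 := by
        nlinarith only [pow_nonneg hcM0.le K]
      exact div_le_div_of_nonneg_right h1 (by linarith : (0:ℝ) ≤ 1 - cM)
    have haK : ‖x K - xss (u K) (w K)‖ ≤ Pk K / Real.sqrt α₁ := hVlow K (u K) (huU K)
    have hdK : ‖u K - ustar (w K)‖ ≤ bk K / sm := hdum K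
    set R0 := Real.sqrt (‖x 0 - xss (u 0) (w 0)‖^2 + ‖u 0 - ustar (w 0)‖^2) with hR0def
    have hR00 : 0 ≤ R0 := Real.sqrt_nonneg _
    have hLHS : Real.sqrt (‖x K - xss (u K) (w K)‖^2 + ‖u K - ustar (w K)‖^2) ≤ C₁ * Nk K := by
      have hPN : Pk K ≤ Nk K := le_max_left _ _
      have hbN : bk K ≤ θ * Nk K := by
        have h1 : bk K / θ ≤ Nk K := le_max_right _ _
        calc bk K = θ * (bk K / θ) := by field_simp
          _ ≤ θ * Nk K := mul_le_mul_of_nonneg_left h1 hθ0.le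
      calc Real.sqrt (‖x K - xss (u K) (w K)‖^2 + ‖u K - ustar (w K)‖^2)
          ≤ ‖x K - xss (u K) (w K)‖ + ‖u K - ustar (w K)‖ :=
            StmtAux.sqrt_add_sq_le' (norm_nonneg _) (norm_nonneg _)
        _ ≤ Pk K / Real.sqrt α₁ + bk K / sm := add_le_add haK hdK
        _ ≤ Nk K / Real.sqrt α₁ + (θ * Nk K) / sm := by
            apply add_le_add (div_le_div_of_nonneg_right hPN hsa1.le)
              (div_le_div_of_nonneg_right hbN hsm0.le)
        _ = C₁ * Nk K := by rw [hC₁def]; field_simp [hsa1.ne', hsm0.ne']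
    have hN0b : Nk 0 ≤ C₂ * R0 := by
      apply max_le
      · calc Pk 0 ≤ Real.sqrt α₂ * ‖x 0 - xss (u 0) (w 0)‖ := hVup 0 (u 0) (huU 0)
          _ ≤ Real.sqrt α₂ * R0 := by
              apply mul_le_mul_of_nonneg_left _ hsa2.le
              rw [hR0def]
              exact StmtAux.le_sqrt_add_sq_left (norm_nonneg _)
          _ ≤ C₂ * R0 := mul_le_mul_of_nonneg_right hC₂a hR00
      · calc bk 0 / θ ≤ sM * ‖u 0 - ustar (w 0)‖ / θ :=
              div_le_div_of_nonneg_right (hpnub _) hθ0.le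
          _ ≤ (sM/θ) * R0 := by
              have he : (sM/θ) * R0 = sM * R0 / θ := by ring
              rw [he]
              apply div_le_div_of_nonneg_right _ hθ0.le
              apply mul_le_mul_of_nonneg_left _ hsM0.le
              rw [hR0def]
              exact StmtAux.le_sqrt_add_sq_right (norm_nonneg _)
          _ ≤ C₂ * R0 := mul_le_mul_of_nonneg_right hC₂b hR00
    have hsum : SX + SY ≤ 2 * Real.sqrt (SX^2 + SY^2) := by
      have h1 := StmtAux.le_sqrt_add_sq_left (y := SY) hSX0
      have h2 := StmtAux.le_sqrt_add_sq_right (x := SX) hSY0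
      linarith
    have hfinal : C₁ * Nk K ≤ C₁*C₂ * cM^K * R0 + 2*C₁*KK/cM * (cM/(1-cM)) * Real.sqrt (SX^2 + SY^2) := by
      have h1 : Nk K ≤ cM^K * Nk 0 + (∑ i ∈ Finset.range K, cM^i) * (KK*SX+KK*SY) :=
        hind K le_rfl
      have h2 : (∑ i ∈ Finset.range K, cM^i) * (KK*SX+KK*SY) ≤ (1/(1-cM)) * (KK*SX+KK*SY) :=
        mul_le_mul_of_nonneg_right hgeo hGB0
      have h3 : cM^K * Nk 0 ≤ cM^K * (C₂ * R0) :=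
        mul_le_mul_of_nonneg_left hN0b (pow_nonneg hcM0.le K)
      have h4 : (1/(1-cM)) * (KK*SX+KK*SY) ≤ (1/(1-cM)) * (KK * (2*Real.sqrt (SX^2+SY^2))) := by
        apply mul_le_mul_of_nonneg_left _ (le_of_lt (div_pos one_pos (by linarith : (0:ℝ) < 1-cM)))
        calc KK*SX + KK*SY = KK * (SX + SY) := by ring
          _ ≤ KK * (2*Real.sqrt (SX^2+SY^2)) := mul_le_mul_of_nonneg_left hsum hKK0.le
      have h5 : 2*C₁*KK/cM * (cM/(1-cM)) = C₁ * ((1/(1-cM)) * (KK*2)) := by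
        have hne : (1:ℝ) - cM ≠ 0 := by
          intro hcon; exact absurd (by linarith : cM = 1) (ne_of_lt hcM1)
        field_simp [hcM0.ne', hne]
      have h6 : Nk K ≤ cM^K * (C₂*R0) + (1/(1-cM)) * (KK * (2*Real.sqrt (SX^2+SY^2))) := by
        linarith
      calc C₁ * Nk K ≤ C₁ * (cM^K * (C₂*R0) + (1/(1-cM)) * (KK * (2*Real.sqrt (SX^2+SY^2)))) :=
            mul_le_mul_of_nonneg_left h6 hC₁0.le
        _ = C₁*C₂ * cM^K * R0 + 2*C₁*KK/cM * (cM/(1-cM)) * Real.sqrt (SX^2+SY^2) := by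
            rw [h5]; ring
    calc Real.sqrt (‖x K - xss (u K) (w K)‖^2 + ‖u K - ustar (w K)‖^2)
        ≤ C₁ * Nk K := hLHS
      _ ≤ C₁*C₂ * cM^K * R0 + 2*C₁*KK/cM * (cM/(1-cM)) * Real.sqrt (SX^2 + SY^2) := hfinal
end

section
/- Let η₁ > 0, c_M ∈ [0,1), let γ : ℝ_{≥0} → ℝ_{≥0} be continuous and nondecreasing with γ(0) = 0, let ℓ_g, ℓ_x > 0, and let (δx^k), (δu^k), (δy^k), (z^k) be sequences with z^k ≥ 0 bounded, (‖(δx^k, δu^k)‖) bounded, such that: (i) ‖δy^k‖ ≤ ℓ_g(1 + ℓ_x)·‖(δx^k, δu^k)‖ for all k, and (ii) for all k₀ ≤ k, ‖(δx^k, δu^k)‖ ≤ η₁·c_M^{k − k₀}·‖(δx^{k₀}, δu^{k₀})‖ + γ(sup_{k₀ ≤ s ≤ k−1} z^s). Then limsup_{k→∞} ‖δy^k‖ ≤ γ_a(limsup_{k→∞} z^k), where γ_a(ζ) := ℓ_g(1 + ℓ_x)·γ(ζ). -/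
open Filter

/-- **Corollary 1**: under the restarted ISS estimate and the per-step output error bound,
the asymptotic output tracking error is bounded by the asymptotic gain `γ_a = ℓ_g(1+ℓ_x)·γ`
applied to the asymptotic disturbance rate. -/
theorem stmt5 {E F G : Type*}
    [NormedAddCommGroup E] [NormedAddCommGroup F] [NormedAddCommGroup G]
    (η₁ cM ℓg ℓx : ℝ) (hη₁ : 0 < η₁) (hcM0 : 0 ≤ cM) (hcM1 : cM < 1)
    (hℓg : 0 < ℓg) (hℓx : 0 < ℓx)
    (γ : ℝ → ℝ) (hγc : ContinuousOn γ (Set.Ici 0)) (hγm : MonotoneOn γ (Set.Ici 0))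
    (hγ0 : γ 0 = 0)
    (δx : ℕ → E) (δu : ℕ → F) (δy : ℕ → G) (z : ℕ → ℝ)
    (hz0 : ∀ k, 0 ≤ z k) (hzb : ∃ B, ∀ k, z k ≤ B)
    (hξb : ∃ B, ∀ k, Real.sqrt (‖δx k‖^2 + ‖δu k‖^2) ≤ B)
    (hy : ∀ k, ‖δy k‖ ≤ ℓg * (1 + ℓx) * Real.sqrt (‖δx k‖^2 + ‖δu k‖^2))
    (hISS : ∀ k₀ k : ℕ, k₀ ≤ k →
      Real.sqrt (‖δx k‖^2 + ‖δu k‖^2) ≤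
        η₁ * cM^(k - k₀) * Real.sqrt (‖δx k₀‖^2 + ‖δu k₀‖^2)
          + γ (sSup (z '' Set.Ico k₀ k))) :
    Filter.limsup (fun k => ‖δy k‖) atTop ≤
      ℓg * (1 + ℓx) * γ (Filter.limsup z atTop) := by
  set c : ℝ := ℓg * (1 + ℓx) with hc
  have hcpos : 0 < c := by positivity
  obtain ⟨B, hB⟩ := hξb
  obtain ⟨Bz, hBz⟩ := hzb
  set ξ : ℕ → ℝ := fun k => Real.sqrt (‖δx k‖^2 + ‖δu k‖^2) with hξdef
  have hξ0 : ∀ k, 0 ≤ ξ k := fun k => Real.sqrt_nonneg _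
  have hB0 : 0 ≤ B := le_trans (hξ0 0) (hB 0)
  set L : ℝ := Filter.limsup z atTop with hL
  have hzbdd : IsBoundedUnder (· ≤ ·) atTop z := isBoundedUnder_of ⟨Bz, fun k => hBz k⟩
  have hL0 : 0 ≤ L :=
    le_limsup_of_frequently_le (Frequently.of_forall hz0) hzbdd
  have hcob : IsCoboundedUnder (· ≤ ·) atTop (fun k => ‖δy k‖) :=
    IsBoundedUnder.isCoboundedUnder_le (isBoundedUnder_of ⟨0, fun k => norm_nonneg _⟩)
  refine le_of_forall_pos_le_add ?_
  intro ε hε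
  -- continuity of γ at L from the right
  have hcont : ContinuousWithinAt γ (Set.Ici 0) L := hγc L hL0
  rw [Metric.continuousWithinAt_iff] at hcont
  obtain ⟨r, hr, hrr⟩ := hcont (ε / (2 * c)) (by positivity)
  set t : ℝ := L + r / 2 with ht
  have ht0 : 0 ≤ t := by rw [ht]; linarith
  have htγ : γ t ≤ γ L + ε / (2 * c) := by
    have hd : dist t L < r := by
      rw [Real.dist_eq]
      rw [show t - L = r / 2 by simp [ht]]
      rw [abs_of_nonneg (by linarith)]
      linarith
    have := hrr ht0 hd
    rw [Real.dist_eq] at this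
    have := abs_lt.1 this
    linarith [this.1, this.2]
  have hLt : L < t := by rw [ht]; linarith
  have hev : ∀ᶠ k in atTop, z k < t := eventually_lt_of_limsup_lt hLt hzbdd
  rw [eventually_atTop] at hev
  obtain ⟨k₀, hk₀⟩ := hev
  have hsup : ∀ k, k₀ ≤ k → γ (sSup (z '' Set.Ico k₀ k)) ≤ γ t := by
    intro k hk
    rcases eq_or_lt_of_le hk with rfl | hlt
    · rw [Set.Ico_self, Set.image_empty, Real.sSup_empty, hγ0]
      have : γ 0 ≤ γ t := hγm Set.self_mem_Ici ht0 ht0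
      rwa [hγ0] at this
    · have hmem : z k₀ ∈ z '' Set.Ico k₀ k := ⟨k₀, ⟨le_refl _, hlt⟩, rfl⟩
      have hne : (z '' Set.Ico k₀ k).Nonempty := ⟨z k₀, hmem⟩
      have hub : ∀ y ∈ z '' Set.Ico k₀ k, y ≤ t := by
        rintro y ⟨s, hs, rfl⟩; exact (hk₀ s hs.1).le
      have hs1 : sSup (z '' Set.Ico k₀ k) ≤ t := csSup_le hne hub
      have hs0 : (0 : ℝ) ≤ sSup (z '' Set.Ico k₀ k) :=
        le_trans (hz0 k₀) (le_csSup ⟨t, hub⟩ hmem)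
      exact hγm hs0 ht0 hs1
  -- tail estimate
  have htail : Tendsto (fun k : ℕ => η₁ * cM ^ (k - k₀) * B) atTop (nhds 0) := by
    have h1 : Tendsto (fun n : ℕ => cM ^ n) atTop (nhds 0) :=
      tendsto_pow_atTop_nhds_zero_of_lt_one hcM0 hcM1
    have h2 : Tendsto (fun k : ℕ => k - k₀) atTop atTop :=
      tendsto_sub_atTop_nat k₀
    have h3 : Tendsto (fun k : ℕ => cM ^ (k - k₀)) atTop (nhds 0) := h1.comp h2
    have := (h3.const_mul η₁).mul_const B
    simpa using this
  have hev2 : ∀ᶠ k in atTop, η₁ * cM ^ (k - k₀) * B ≤ ε / (2 * c) := by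
    have := htail.eventually (eventually_le_nhds (show (0:ℝ) < ε / (2 * c) by positivity))
    exact this
  have hfinal : ∀ᶠ k in atTop, ‖δy k‖ ≤ c * γ L + ε := by
    filter_upwards [hev2, eventually_ge_atTop k₀] with k h2 hk
    have hISSk := hISS k₀ k hk
    have hξk : ξ k ≤ ε / (2 * c) + (γ L + ε / (2 * c)) := by
      have h4 : η₁ * cM ^ (k - k₀) * ξ k₀ ≤ η₁ * cM ^ (k - k₀) * B := by
        apply mul_le_mul_of_nonneg_left (hB k₀) (by positivity)
      calc ξ k ≤ η₁ * cM ^ (k - k₀) * ξ k₀ + γ (sSup (z '' Set.Ico k₀ k)) := hISSk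
        _ ≤ η₁ * cM ^ (k - k₀) * B + γ t := add_le_add (h4) (hsup k hk)
        _ ≤ ε / (2 * c) + (γ L + ε / (2 * c)) := add_le_add h2 htγ
    calc ‖δy k‖ ≤ c * ξ k := hy k
      _ ≤ c * (ε / (2 * c) + (γ L + ε / (2 * c))) :=
        mul_le_mul_of_nonneg_left hξk hcpos.le
      _ = c * γ L + ε := by field_simp; ring
  exact limsup_le_of_le hcob hfinal
end

section
/- Let P be a symmetric positive definite n_u × n_u matrix with eigenvalue bounds λmin(P), λmax(P), and ‖a‖_P := √(aᵀPa). Let ε ∈ (0,1], c_T ∈ (0,1), ℓ_T, ℓ_g, ℓ_{u*} > 0, α₁ > 0, and let: T : ℝ^{n_u} × ℝ^{n_y} → ℝ^{n_u} with ‖T(u,y) − T(u,y')‖ ≤ ℓ_T‖y − y'‖; g with ‖g(x,w) − g(x',w)‖ ≤ ℓ_g‖x − x'‖; h(u,w) := g(x_ss(u,w), w); u* with u*(w) = (1−ε)u*(w) + ε·T(u*(w), h(u*(w), w)), ‖(1−ε)u + ε·T(u, h(u,w)) − u*(w)‖_P ≤ φ(ε)·‖u − u*(w)‖_P where φ(ε)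 := 1 − ε(1 − c_T), and ‖u*(w') − u*(w)‖ ≤ ℓ_{u*}‖w' − w‖; and V with α₁‖x − x_ss(u,w)‖² ≤ V(x,u,w), W := √V. If u^{k+1} = (1−ε)u^k + ε·T(u^k, y^{k+1}) with y^{k+1} = g(x^{k+1}, w^{k+1}), then ‖u^{k+1} − u*(w^{k+1})‖_P ≤ φ(ε)·‖u^k − u*(w^k)‖_P + φ(ε)·√(λmax(P))·ℓ_{u*}·‖w^{k+1} − w^k‖ + ε·(√(λmax(P))·ℓ_T·ℓ_g/√α₁)·W(x^{k+1}, u^k, w^{k+1}). -/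
lemma quad_eq_sum {n : ℕ} {P : Matrix (Fin n) (Fin n) ℝ} (hP : P.IsHermitian)
    (a : EuclideanSpace ℝ (Fin n)) :
    dotProduct (fun i => a i) (P.mulVec fun i => a i)
      = ∑ i, hP.eigenvalues i * inner ℝ a (hP.eigenvectorBasis i)^2 := by
  have hsym : P.toEuclideanLin.IsSymmetric := Matrix.isHermitian_iff_isSymmetric.mp hP
  have hdq : dotProduct (fun i => a i) (P.mulVec fun i => a i)
      = inner ℝ a (Matrix.toEuclideanLin P a) := by
    simp [Matrix.toEuclideanLin_apply, PiLp.inner_apply, dotProduct, mul_comm]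
  have hb : ∀ i, Matrix.toEuclideanLin P (hP.eigenvectorBasis i)
      = hP.eigenvalues i • hP.eigenvectorBasis i := by
    intro i
    have := hP.mulVec_eigenvectorBasis i
    apply (WithLp.equiv 2 (Fin n → ℝ)).injective
    simpa [Matrix.toEuclideanLin_apply] using this
  rw [hdq, ← (hP.eigenvectorBasis).sum_inner_mul_inner a (Matrix.toEuclideanLin P a)]
  refine Finset.sum_congr rfl fun i _ => ?_
  have : inner ℝ (hP.eigenvectorBasis i) (Matrix.toEuclideanLin P a)
      = hP.eigenvalues i * inner ℝ (hP.eigenvectorBasis i) a := by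
    rw [← hsym (hP.eigenvectorBasis i) a, hb i, inner_smul_left]
    simp
  rw [this, real_inner_comm a (hP.eigenvectorBasis i)]
  ring

lemma quad_le {n : ℕ} (hn : 0 < n) {P : Matrix (Fin n) (Fin n) ℝ} (hP : P.PosDef)
    (a : EuclideanSpace ℝ (Fin n)) :
    dotProduct (fun i => a i) (P.mulVec fun i => a i) ≤ eigMax hP.1 * ‖a‖^2 := by
  haveI : Nonempty (Fin n) := ⟨⟨0, hn⟩⟩
  rw [quad_eq_sum hP.1]
  have hle : ∀ i, hP.1.eigenvalues i ≤ eigMax hP.1 := fun i =>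
    le_ciSup (Set.Finite.bddAbove (Set.finite_range _)) i
  calc ∑ i, hP.1.eigenvalues i * inner ℝ a (hP.1.eigenvectorBasis i)^2
      ≤ ∑ i, eigMax hP.1 * inner ℝ a (hP.1.eigenvectorBasis i)^2 := by
        refine Finset.sum_le_sum fun i _ => ?_
        exact mul_le_mul_of_nonneg_right (hle i) (sq_nonneg _)
    _ = eigMax hP.1 * ∑ i, inner ℝ a (hP.1.eigenvectorBasis i)^2 := by
        rw [Finset.mul_sum]
    _ = eigMax hP.1 * ‖a‖^2 := by
        congr 1
        have := (hP.1.eigenvectorBasis).sum_inner_mul_inner a a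
        rw [real_inner_self_eq_norm_sq] at this
        rw [← this]
        refine Finset.sum_congr rfl fun i _ => ?_
        rw [real_inner_comm (hP.1.eigenvectorBasis i) a]; ring

lemma eigMax_nonneg {n : ℕ} (hn : 0 < n) {P : Matrix (Fin n) (Fin n) ℝ} (hP : P.PosDef) :
    0 ≤ eigMax hP.1 := by
  haveI : Nonempty (Fin n) := ⟨⟨0, hn⟩⟩
  exact le_trans (hP.eigenvalues_pos ⟨0, hn⟩).le
    (le_ciSup (Set.Finite.bddAbove (Set.finite_range _)) _)

lemma pnorm_le {n : ℕ} (hn : 0 < n) {P : Matrix (Fin n) (Fin n) ℝ} (hP : P.PosDef)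
    (a : EuclideanSpace ℝ (Fin n)) :
    pnorm P a ≤ Real.sqrt (eigMax hP.1) * ‖a‖ := by
  rw [pnorm, ← Real.sqrt_sq (norm_nonneg a), ← Real.sqrt_mul (eigMax_nonneg hn hP)]
  exact Real.sqrt_le_sqrt (quad_le hn hP a)

open scoped MatrixOrder in
lemma pnorm_eq_norm_sqrt {n : ℕ} {P : Matrix (Fin n) (Fin n) ℝ} (hP : P.PosDef)
    (a : EuclideanSpace ℝ (Fin n)) :
    pnorm P a = ‖((WithLp.equiv 2 (Fin n → ℝ)).symm
      ((CFC.sqrt P).mulVec fun i => a i) : EuclideanSpace ℝ (Fin n))‖ := by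
  set B := CFC.sqrt P with hBdef
  have hBB : B * B = P := CFC.sqrt_mul_sqrt_self P hP.posSemidef.nonneg
  have hBsym : B.transpose = B := by
    have h := (Matrix.nonneg_iff_posSemidef.mp (CFC.sqrt_nonneg P)).1
    exact (Matrix.conjTranspose_eq_transpose_of_trivial _).symm.trans h
  have h1 : dotProduct (fun i => a i) (P.mulVec fun i => a i)
      = dotProduct (B.mulVec fun i => a i) (B.mulVec fun i => a i) := by
    rw [← hBB, ← Matrix.mulVec_mulVec, Matrix.dotProduct_mulVec, ← Matrix.mulVec_transpose, hBsym]
  rw [pnorm, h1, EuclideanSpace.norm_eq]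
  congr 1
  simp [dotProduct, sq_abs, pow_two]

open scoped MatrixOrder in
lemma pnorm_triangle {n : ℕ} {P : Matrix (Fin n) (Fin n) ℝ} (hP : P.PosDef)
    (a b : EuclideanSpace ℝ (Fin n)) :
    pnorm P (a + b) ≤ pnorm P a + pnorm P b := by
  rw [pnorm_eq_norm_sqrt hP, pnorm_eq_norm_sqrt hP, pnorm_eq_norm_sqrt hP]
  have h : (fun i => (a + b) i) = (fun i => a i) + (fun i => b i) := rfl
  rw [h, Matrix.mulVec_add]
  have h2 : ((WithLp.equiv 2 (Fin n → ℝ)).symm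
      ((CFC.sqrt P).mulVec (fun i => a i) + (CFC.sqrt P).mulVec (fun i => b i))
        : EuclideanSpace ℝ (Fin n))
      = (WithLp.equiv 2 (Fin n → ℝ)).symm ((CFC.sqrt P).mulVec fun i => a i)
        + (WithLp.equiv 2 (Fin n → ℝ)).symm ((CFC.sqrt P).mulVec fun i => b i) := rfl
  rw [h2]
  exact norm_add_le _ _

/-- The one-step input-tracking-error inequality (chain (29), up to step (s.4)) in the proof
of Theorem 1. -/
theorem stmt6 {nx nu nw ny : ℕ} (hnu : 0 < nu)
    (P : Matrix (Fin nu) (Fin nu) ℝ) (hP : P.PosDef)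
    (ε cT ℓT ℓg ℓus α₁ : ℝ)
    (hε0 : 0 < ε) (hε1 : ε ≤ 1) (hcT : cT ∈ Set.Ioo (0:ℝ) 1)
    (hℓT : 0 < ℓT) (hℓg : 0 < ℓg) (hℓus : 0 < ℓus) (hα₁ : 0 < α₁)
    (T : EuclideanSpace ℝ (Fin nu) → EuclideanSpace ℝ (Fin ny) → EuclideanSpace ℝ (Fin nu))
    (hT : ∀ u y y', ‖T u y - T u y'‖ ≤ ℓT * ‖y - y'‖)
    (g : EuclideanSpace ℝ (Fin nx) → EuclideanSpace ℝ (Fin nw) → EuclideanSpace ℝ (Fin ny))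
    (hg : ∀ x x' w, ‖g x w - g x' w‖ ≤ ℓg * ‖x - x'‖)
    (xss : EuclideanSpace ℝ (Fin nu) → EuclideanSpace ℝ (Fin nw) → EuclideanSpace ℝ (Fin nx))
    (ustar : EuclideanSpace ℝ (Fin nw) → EuclideanSpace ℝ (Fin nu))
    (hfix : ∀ w, ustar w = (1-ε) • ustar w + ε • T (ustar w) (g (xss (ustar w) w) w))
    (hcontr : ∀ u w,
      pnorm P ((1-ε) • u + ε • T u (g (xss u w) w) - ustar w) ≤
        (1 - ε*(1 - cT)) * pnorm P (u - ustar w))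
    (hustarLip : ∀ w w', ‖ustar w' - ustar w‖ ≤ ℓus * ‖w' - w‖)
    (V : EuclideanSpace ℝ (Fin nx) → EuclideanSpace ℝ (Fin nu) → EuclideanSpace ℝ (Fin nw) → ℝ)
    (hV : ∀ x u w, α₁ * ‖x - xss u w‖^2 ≤ V x u w)
    (xk1 : EuclideanSpace ℝ (Fin nx)) (uk uk1 : EuclideanSpace ℝ (Fin nu))
    (wk wk1 : EuclideanSpace ℝ (Fin nw))
    (hupd : uk1 = (1-ε) • uk + ε • T uk (g xk1 wk1)) :
    pnorm P (uk1 - ustar wk1) ≤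
      (1 - ε*(1 - cT)) * pnorm P (uk - ustar wk)
        + (1 - ε*(1 - cT)) * Real.sqrt (eigMax hP.1) * ℓus * ‖wk1 - wk‖
        + ε * (Real.sqrt (eigMax hP.1) * ℓT * ℓg / Real.sqrt α₁) *
            Real.sqrt (V xk1 uk wk1) := by
  obtain ⟨hcT0, hcT1⟩ := hcT
  set φ := 1 - ε*(1 - cT) with hφ
  have hφ0 : 0 ≤ φ := by nlinarith
  set M := Real.sqrt (eigMax hP.1) with hM
  have hM0 : 0 ≤ M := Real.sqrt_nonneg _
  -- decomposition
  set v1 : EuclideanSpace ℝ (Fin nu) :=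
    (1-ε) • uk + ε • T uk (g (xss uk wk1) wk1) - ustar wk1 with hv1
  set v2 : EuclideanSpace ℝ (Fin nu) :=
    ε • (T uk (g xk1 wk1) - T uk (g (xss uk wk1) wk1)) with hv2
  have hdecomp : uk1 - ustar wk1 = v1 + v2 := by
    rw [hupd, hv1, hv2, smul_sub]; abel
  have h1 : pnorm P (uk1 - ustar wk1) ≤ pnorm P v1 + pnorm P v2 := by
    rw [hdecomp]; exact pnorm_triangle hP _ _
  -- bound on v1
  have hv1a : pnorm P v1 ≤ φ * pnorm P (uk - ustar wk1) := hcontr uk wk1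
  have hsplit : uk - ustar wk1 = (uk - ustar wk) + (ustar wk - ustar wk1) := by abel
  have hv1b : pnorm P (uk - ustar wk1) ≤ pnorm P (uk - ustar wk) + M * (ℓus * ‖wk1 - wk‖) := by
    calc pnorm P (uk - ustar wk1)
        ≤ pnorm P (uk - ustar wk) + pnorm P (ustar wk - ustar wk1) := by
          rw [hsplit]; exact pnorm_triangle hP _ _
      _ ≤ pnorm P (uk - ustar wk) + M * (ℓus * ‖wk1 - wk‖) := by
          have h := pnorm_le hnu hP (ustar wk - ustar wk1)
          have h2 : ‖ustar wk - ustar wk1‖ ≤ ℓus * ‖wk1 - wk‖ := by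
            rw [norm_sub_rev]; exact hustarLip wk wk1
          have := h.trans (mul_le_mul_of_nonneg_left h2 hM0)
          linarith
  -- bound on v2
  have hxb : ‖xk1 - xss uk wk1‖ ≤ Real.sqrt (V xk1 uk wk1) / Real.sqrt α₁ := by
    have hVnn : 0 ≤ V xk1 uk wk1 :=
      le_trans (by positivity) (hV xk1 uk wk1)
    have hsq : ‖xk1 - xss uk wk1‖^2 ≤ V xk1 uk wk1 / α₁ := by
      rw [le_div_iff₀ hα₁]
      have := hV xk1 uk wk1
      nlinarith
    calc ‖xk1 - xss uk wk1‖ = Real.sqrt (‖xk1 - xss uk wk1‖^2) :=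
          (Real.sqrt_sq (norm_nonneg _)).symm
      _ ≤ Real.sqrt (V xk1 uk wk1 / α₁) := Real.sqrt_le_sqrt hsq
      _ = Real.sqrt (V xk1 uk wk1) / Real.sqrt α₁ := Real.sqrt_div hVnn α₁
  have hv2a : pnorm P v2 ≤ ε * (M * ℓT * ℓg / Real.sqrt α₁) * Real.sqrt (V xk1 uk wk1) := by
    have hn2 : ‖v2‖ = ε * ‖T uk (g xk1 wk1) - T uk (g (xss uk wk1) wk1)‖ := by
      rw [hv2, norm_smul, Real.norm_eq_abs, abs_of_pos hε0]
    have hTb : ‖T uk (g xk1 wk1) - T uk (g (xss uk wk1) wk1)‖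
        ≤ ℓT * (ℓg * ‖xk1 - xss uk wk1‖) := by
      refine le_trans (hT uk _ _) (mul_le_mul_of_nonneg_left (hg _ _ _) hℓT.le)
    have := pnorm_le hnu hP v2
    have hchain : ‖v2‖ ≤ ε * (ℓT * (ℓg * (Real.sqrt (V xk1 uk wk1) / Real.sqrt α₁))) := by
      rw [hn2]
      refine mul_le_mul_of_nonneg_left ?_ hε0.le
      refine le_trans hTb (mul_le_mul_of_nonneg_left ?_ hℓT.le)
      exact mul_le_mul_of_nonneg_left hxb hℓg.le
    calc pnorm P v2 ≤ M * ‖v2‖ := this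
      _ ≤ M * (ε * (ℓT * (ℓg * (Real.sqrt (V xk1 uk wk1) / Real.sqrt α₁)))) :=
          mul_le_mul_of_nonneg_left hchain hM0
      _ = ε * (M * ℓT * ℓg / Real.sqrt α₁) * Real.sqrt (V xk1 uk wk1) := by ring
  have hv1c : pnorm P v1 ≤ φ * pnorm P (uk - ustar wk) + φ * M * ℓus * ‖wk1 - wk‖ := by
    refine le_trans hv1a ?_
    have := mul_le_mul_of_nonneg_left hv1b hφ0
    linarith [this]
  exact h1.trans (add_le_add hv1c hv2a)
end

section
/- Let (ξ^k) and (z^k) be bounded sequences of nonnegative reals, let η ≥ 0, c ∈ [0,1), and let γ : ℝ_{≥0} → ℝ_{≥0} be continuous and nondecreasing. Suppose that for all nonnegative integers k₀ ≤ k, ξ^k ≤ η·c^{k − k₀}·ξ^{k₀} + γ(sup_{k₀ ≤ s ≤ k−1} z^s) (the supremum over an empty range being 0). Then limsup_{k→∞} ξ^k ≤ γ(limsup_{k→∞} z^k). -/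
open Filter

/-- The asymptotic-gain argument used in the proof of Corollary 1: a restarted ISS estimate
implies that the limsup of the state error is bounded by `γ` of the limsup of the input. -/
theorem stmt12 (ξ z : ℕ → ℝ)
    (hξ0 : ∀ k, 0 ≤ ξ k) (hz0 : ∀ k, 0 ≤ z k)
    (hξb : ∃ B, ∀ k, ξ k ≤ B) (hzb : ∃ B, ∀ k, z k ≤ B)
    (η c : ℝ) (hη : 0 ≤ η) (hc0 : 0 ≤ c) (hc1 : c < 1)
    (γ : ℝ → ℝ) (hγc : ContinuousOn γ (Set.Ici 0)) (hγm : MonotoneOn γ (Set.Ici 0))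
    (hγ0 : ∀ t ∈ Set.Ici (0:ℝ), 0 ≤ γ t)
    (hISS : ∀ k₀ k : ℕ, k₀ ≤ k →
      ξ k ≤ η * c^(k - k₀) * ξ k₀ + γ (sSup (z '' Set.Ico k₀ k))) :
    Filter.limsup ξ atTop ≤ γ (Filter.limsup z atTop) := by
  obtain ⟨B, hB⟩ := hξb
  obtain ⟨Bz, hBz⟩ := hzb
  set L := Filter.limsup z atTop with hLdef
  have hzbdd : IsBoundedUnder (· ≤ ·) atTop z := isBoundedUnder_of ⟨Bz, hBz⟩
  have hξbdd : IsBoundedUnder (· ≥ ·) atTop ξ := isBoundedUnder_of ⟨0, hξ0⟩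
  have hL0 : 0 ≤ L :=
    le_limsup_of_frequently_le (Filter.Frequently.of_forall hz0) hzbdd
  have hB0 : 0 ≤ B := le_trans (hξ0 0) (hB 0)
  have key : ∀ δ : ℝ, 0 < δ → Filter.limsup ξ atTop ≤ γ (L + δ) := by
    intro δ hδ
    have hlt : L < L + δ := by linarith
    have hev : ∀ᶠ s in atTop, z s < L + δ := eventually_lt_of_limsup_lt hlt hzbdd
    obtain ⟨k₀, hk₀⟩ := eventually_atTop.mp hev
    have hbound : ∀ k ≥ k₀, ξ k ≤ η * c ^ (k - k₀) * B + γ (L + δ) := by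
      intro k hk
      have h1 := hISS k₀ k hk
      have hsup : sSup (z '' Set.Ico k₀ k) ≤ L + δ := by
        apply Real.sSup_le
        · rintro x ⟨s, hs, rfl⟩
          exact (hk₀ s hs.1).le
        · linarith
      have hsup0 : 0 ≤ sSup (z '' Set.Ico k₀ k) :=
        Real.sSup_nonneg (by rintro x ⟨s, _, rfl⟩; exact hz0 s)
      have h2 : γ (sSup (z '' Set.Ico k₀ k)) ≤ γ (L + δ) :=
        hγm hsup0 (by linarith : (0:ℝ) ≤ L + δ) hsup
      have h3 : η * c ^ (k - k₀) * ξ k₀ ≤ η * c ^ (k - k₀) * B :=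
        mul_le_mul_of_nonneg_left (hB k₀) (by positivity)
      linarith
    have htend : Tendsto (fun k : ℕ => η * c ^ (k - k₀) * B + γ (L + δ)) atTop
        (nhds (η * 0 * B + γ (L + δ))) := by
      apply Tendsto.add _ tendsto_const_nhds
      have hc : Tendsto (fun k : ℕ => c ^ (k - k₀)) atTop (nhds 0) := by
        have h := tendsto_pow_atTop_nhds_zero_of_lt_one hc0 hc1
        exact h.comp (tendsto_atTop_atTop.mpr fun n => ⟨n + k₀, fun m hm => by omega⟩)
      exact (hc.const_mul η).mul_const B
    have hls : Filter.limsup ξ atTop ≤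
        Filter.limsup (fun k : ℕ => η * c ^ (k - k₀) * B + γ (L + δ)) atTop := by
      exact limsup_le_limsup (eventually_atTop.mpr ⟨k₀, hbound⟩)
        hξbdd.isCoboundedUnder_le htend.isBoundedUnder_le
    calc Filter.limsup ξ atTop ≤ _ := hls
      _ = η * 0 * B + γ (L + δ) := htend.limsup_eq
      _ = γ (L + δ) := by ring
  -- take δ → 0⁺
  have hcw : ContinuousWithinAt γ (Set.Ici 0) L := hγc L hL0
  have hmap : Tendsto (fun δ : ℝ => L + δ) (nhdsWithin 0 (Set.Ioi 0))
      (nhdsWithin L (Set.Ici 0)) := by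
    rw [tendsto_nhdsWithin_iff]
    constructor
    · have : Tendsto (fun δ : ℝ => L + δ) (nhds 0) (nhds (L + 0)) :=
        (tendsto_const_nhds.add tendsto_id)
      simpa using this.mono_left nhdsWithin_le_nhds
    · filter_upwards [self_mem_nhdsWithin] with δ (hδ : δ ∈ Set.Ioi 0)
      have : (0:ℝ) < δ := hδ
      simp only [Set.mem_Ici]; linarith
  have htend2 : Tendsto (fun δ : ℝ => γ (L + δ)) (nhdsWithin 0 (Set.Ioi 0)) (nhds (γ L)) :=
    hcw.tendsto.comp hmap
  exact ge_of_tendsto htend2 (by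
    filter_upwards [self_mem_nhdsWithin] with δ (hδ : δ ∈ Set.Ioi 0)
    exact key δ hδ)
end
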